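/- arXiv:1805.04427 — 8 statements merged into one kernel-verified Lean document; each statement's English description precedes it below -/
import Mathlib

section
/- Let n be an even integer with n ≥ 2 and set m = 3n/2. Then for every integer N with 1 ≤ N ≤ 3n/2 there exists an element σ of the subgroup C(n, m) of S_m generated by the n-crossing permutations such that σ(1) = N. -/
/-- The underlying function of the `n`-crossing permutation `π_j` over `{1, …, m}` (as a
function on `ℕ`): it sends `j + k` to `j + n - 1 - k` for `0 ≤ k ≤ n - 1` and fixes all
other points. -/
def crossFun (n j i : ℕ) : ℕ :=
  if j ≤ i ∧ i < j + n then 2 * j + n - 1 - i else i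

lemma crossFun_involutive (n j : ℕ) : Function.Involutive (crossFun n j) := by
  intro i
  unfold crossFun
  split_ifs <;> omega

/-- The `n`-crossing permutation `π_j`, viewed as a permutation of `ℕ` fixing every point
outside `{j, …, j + n - 1}`. -/
def crossPerm (n j : ℕ) : Equiv.Perm ℕ :=
  Function.Involutive.toPerm _ (crossFun_involutive n j)

/-- `C n m` is the subgroup of the symmetric group `S_m` (realized as permutations of `ℕ`
supported on `{1, …, m}`) generated by the `n`-crossing permutations `π_1, …, π_{m-n+1}`. -/
def C (n m : ℕ) : Subgroup (Equiv.Perm ℕ) :=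
  Subgroup.closure {σ | ∃ j, 1 ≤ j ∧ j ≤ m - n + 1 ∧ σ = crossPerm n j}

lemma crossPerm_apply (n j v : ℕ) : crossPerm n j v = crossFun n j v := rfl

lemma reach_step (n m j v : ℕ) (hj1 : 1 ≤ j) (hj2 : j ≤ m - n + 1)
    (h : ∃ σ ∈ C n m, σ 1 = v) : ∃ σ ∈ C n m, σ 1 = crossFun n j v := by
  obtain ⟨σ, hσ, hv⟩ := h
  refine ⟨crossPerm n j * σ, Subgroup.mul_mem _
    (Subgroup.subset_closure ⟨j, hj1, hj2, rfl⟩) hσ, ?_⟩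
  rw [Equiv.Perm.mul_apply, hv, crossPerm_apply]

theorem stmt0 (n : ℕ) (hn : Even n) (hn2 : 2 ≤ n)
    (N : ℕ) (hN1 : 1 ≤ N) (hN2 : N ≤ 3 * n / 2) :
    ∃ σ ∈ C n (3 * n / 2), σ 1 = N := by
  obtain ⟨t, ht⟩ := hn
  have hm : 3 * n / 2 = 3 * t := by omega
  rw [hm] at hN2 ⊢
  have ht1 : 1 ≤ t := by omega
  have hbound : ∀ j, j ≤ t + 1 → j ≤ 3 * t - n + 1 := by intro j hj; omega
  have h0 : ∃ σ ∈ C n (3 * t), σ 1 = 1 := ⟨1, Subgroup.one_mem _, rfl⟩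
  -- first step: reach 2t
  have h1 := reach_step n (3 * t) 1 1 le_rfl (hbound 1 (by omega)) h0
  have e1 : crossFun n 1 1 = 2 * t := by unfold crossFun; split_ifs <;> omega
  rw [e1] at h1
  rcases Nat.even_or_odd N with hpar | hpar
  · -- N even, N = 2e
    obtain ⟨e, he⟩ := hpar
    rcases le_or_gt N (2 * t) with hc | hc
    · -- k = t+1, j = e+1
      have h2 := reach_step n (3 * t) (t + 1) (2 * t) (by omega) (hbound _ le_rfl) h1
      have e2 : crossFun n (t + 1) (2 * t) = 2 * t + 1 := by
        unfold crossFun; split_ifs <;> omega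
      rw [e2] at h2
      have h3 := reach_step n (3 * t) (e + 1) (2 * t + 1) (by omega)
        (hbound _ (by omega)) h2
      have e3 : crossFun n (e + 1) (2 * t + 1) = N := by
        unfold crossFun; split_ifs <;> omega
      rwa [e3] at h3
    · -- k = 2t+1-e, j = t+1
      have h2 := reach_step n (3 * t) (2 * t + 1 - e) (2 * t) (by omega)
        (hbound _ (by omega)) h1
      have e2 : crossFun n (2 * t + 1 - e) (2 * t) = 2 * (2 * t + 1 - e) - 1 := by
        unfold crossFun; split_ifs <;> omega
      rw [e2] at h2
      have h3 := reach_step n (3 * t) (t + 1) (2 * (2 * t + 1 - e) - 1) (by omega)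
        (hbound _ le_rfl) h2
      have e3 : crossFun n (t + 1) (2 * (2 * t + 1 - e) - 1) = N := by
        unfold crossFun; split_ifs <;> omega
      rwa [e3] at h3
  · -- N odd
    obtain ⟨c, hc⟩ := hpar
    rcases le_or_gt N (2 * t + 1) with hle | hlt
    · -- N = 2k-1, k = c+1
      have h2 := reach_step n (3 * t) (c + 1) (2 * t) (by omega)
        (hbound _ (by omega)) h1
      have e2 : crossFun n (c + 1) (2 * t) = N := by
        unfold crossFun; split_ifs <;> omega
      rwa [e2] at h2
    · -- N > 2t+1 odd; let e = (4t+1-N)/2, i.e. N = 4t+1-2e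
      set e : ℕ := 2 * t - c with he
      -- reach 2t+1 then 2e then N
      have h2 := reach_step n (3 * t) (t + 1) (2 * t) (by omega) (hbound _ le_rfl) h1
      have e2 : crossFun n (t + 1) (2 * t) = 2 * t + 1 := by
        unfold crossFun; split_ifs <;> omega
      rw [e2] at h2
      have h3 := reach_step n (3 * t) (e + 1) (2 * t + 1) (by omega)
        (hbound _ (by omega)) h2
      have e3 : crossFun n (e + 1) (2 * t + 1) = 2 * e := by
        unfold crossFun; split_ifs <;> omega
      rw [e3] at h3
      have h4 := reach_step n (3 * t) (t + 1) (2 * e) (by omega) (hbound _ le_rfl) h3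
      have e4 : crossFun n (t + 1) (2 * e) = N := by
        unfold crossFun; split_ifs <;> omega
      rwa [e4] at h4
end

section
/- Let n be an even integer with n ≥ 2, let t ≥ 1, and let 0 = l_0 < l_1 < l_2 < ⋯ < l_t be integers. Set m = l_t + 3n − 3 and let τ ∈ S_m be the product of the cycles (1, 2, …, l_1)(l_1+1, …, l_2)⋯(l_{t−1}+1, …, l_t−1, l_t). Then for every integer N with l_t ≤ N ≤ l_t + 3n − 3 there exists g ∈ C(n, m) such that g τ g⁻¹ equals the product of cycles (1, 2, …, l_1)(l_1+1, …, l_2)⋯(l_{t−1}+1, …, l_t−1, N). -/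
lemma crossPerm_apply_s1 (n j i : ℕ) :
    crossPerm n j i = if j ≤ i ∧ i < j + n then 2 * j + n - 1 - i else i := rfl

lemma crossPerm_mem_C {n m j : ℕ} (h1 : 1 ≤ j) (h2 : j ≤ m - n + 1) :
    crossPerm n j ∈ C n m :=
  Subgroup.subset_closure ⟨j, h1, h2, rfl⟩

def sigmaPerm (n j : ℕ) : Equiv.Perm ℕ := crossPerm n (j + 1) * crossPerm n j

lemma sigmaPerm_mem_C {n m j : ℕ} (h1 : 1 ≤ j) (h2 : j + 1 ≤ m - n + 1) :
    sigmaPerm n j ∈ C n m :=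
  mul_mem (crossPerm_mem_C (by omega) h2) (crossPerm_mem_C h1 (by omega))

lemma sigmaPerm_apply_in {n j p : ℕ} (hn : 2 ≤ n) (h1 : j ≤ p) (h2 : p ≤ j + n) :
    sigmaPerm n j p = j + (p - j + 2) % (n + 1) := by
  have hmod : (p - j + 2) % (n + 1) =
      if p - j + 2 < n + 1 then p - j + 2 else p - j + 2 - (n + 1) := by
    split_ifs with h
    · exact Nat.mod_eq_of_lt h
    · rw [Nat.mod_eq_sub_mod (by omega)]; exact Nat.mod_eq_of_lt (by omega)
  rw [hmod]
  simp only [sigmaPerm, Equiv.Perm.mul_apply, crossPerm_apply_s1]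
  split_ifs <;> omega

lemma sigmaPerm_apply_out {n j p : ℕ} (h : p < j ∨ j + n < p) : sigmaPerm n j p = p := by
  simp only [sigmaPerm, Equiv.Perm.mul_apply, crossPerm_apply_s1]
  split_ifs <;> omega

lemma sigmaPerm_pow_apply {n j p : ℕ} (hn : 2 ≤ n) (h1 : j ≤ p) (h2 : p ≤ j + n) (k : ℕ) :
    (sigmaPerm n j ^ k) p = j + (p - j + 2 * k) % (n + 1) := by
  induction k with
  | zero =>
    simp only [pow_zero, Equiv.Perm.one_apply, Nat.mul_zero, Nat.add_zero]
    rw [Nat.mod_eq_of_lt (by omega)]; omega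
  | succ k ih =>
    have hb : (p - j + 2 * k) % (n + 1) < n + 1 := Nat.mod_lt _ (by omega)
    rw [pow_succ', Equiv.Perm.mul_apply, ih,
      sigmaPerm_apply_in hn (Nat.le_add_right _ _) (by omega)]
    congr 1
    rw [Nat.add_sub_cancel_left, Nat.mod_add_mod]
    rfl

lemma sigmaPerm_pow_fix {n j p : ℕ} (h : p < j ∨ j + n < p) (k : ℕ) :
    (sigmaPerm n j ^ k) p = p := by
  induction k with
  | zero => rfl
  | succ k ih => rw [pow_succ', Equiv.Perm.mul_apply, ih, sigmaPerm_apply_out h]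

lemma step_lemma {n : ℕ} (hn : n % 2 = 0) (hn2 : 2 ≤ n) (m j r : ℕ)
    (hj : 1 ≤ j) (hjm : j + 1 ≤ m - n + 1) (hr : r ≤ n) :
    ∃ g ∈ C n m, g j = j + r ∧ ∀ i < j, g i = i := by
  obtain ⟨k, hk⟩ : ∃ k, 2 * k = r ∨ 2 * k = r + (n + 1) :=
    ⟨if r % 2 = 0 then r / 2 else (r + n + 1) / 2, by split <;> omega⟩
  refine ⟨sigmaPerm n j ^ k, Subgroup.pow_mem _ (sigmaPerm_mem_C hj hjm) k, ?_, ?_⟩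
  · rw [sigmaPerm_pow_apply hn2 le_rfl (Nat.le_add_right _ _)]
    have : (j - j + 2 * k) % (n + 1) = r := by
      rcases hk with hk | hk
      · rw [show j - j + 2 * k = r by omega]; exact Nat.mod_eq_of_lt (by omega)
      · rw [show j - j + 2 * k = r + (n + 1) by omega, Nat.add_mod_right]
        exact Nat.mod_eq_of_lt (by omega)
    rw [this]
  · intro i hi
    exact sigmaPerm_pow_fix (Or.inl hi) k

lemma reach_lemma {n : ℕ} (hn : n % 2 = 0) (hn2 : 2 ≤ n) (a N : ℕ)
    (ha : 1 ≤ a) (hN1 : a ≤ N) (hN2 : N ≤ a + 3 * n - 3) :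
    ∃ g ∈ C n (a + 3 * n - 3), g a = N ∧ ∀ i < a, g i = i := by
  set m := a + 3 * n - 3 with hm
  have hmn : m - n + 1 = a + 2 * n - 2 := by omega
  rcases le_or_gt N (a + n) with hc1 | hc1
  · obtain ⟨g, hg, hga, hgf⟩ := step_lemma hn hn2 m a (N - a) ha (by omega) (by omega)
    exact ⟨g, hg, by rw [hga]; omega, hgf⟩
  · rcases le_or_gt N (a + 2 * n - 2) with hc2 | hc2
    · obtain ⟨g1, hg1, hg1a, hg1f⟩ := step_lemma hn hn2 m a (n - 2) ha (by omega) (by omega)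
      obtain ⟨g2, hg2, hg2a, hg2f⟩ := step_lemma hn hn2 m (a + n - 2) (N - (a + n - 2))
        (by omega) (by omega) (by omega)
      refine ⟨g2 * g1, mul_mem hg2 hg1, ?_, ?_⟩
      · rw [Equiv.Perm.mul_apply, hg1a, show a + (n - 2) = a + n - 2 by omega, hg2a]
        omega
      · intro i hi
        rw [Equiv.Perm.mul_apply, hg1f i hi, hg2f i (by omega)]
    · obtain ⟨g1, hg1, hg1a, hg1f⟩ := step_lemma hn hn2 m a (n - 2) ha (by omega) (by omega)
      obtain ⟨g2, hg2, hg2a, hg2f⟩ := step_lemma hn hn2 m (a + n - 2) (n - 1)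
        (by omega) (by omega) (by omega)
      obtain ⟨g3, hg3, hg3a, hg3f⟩ := step_lemma hn hn2 m (a + 2 * n - 3) (N - (a + 2 * n - 3))
        (by omega) (by omega) (by omega)
      refine ⟨g3 * g2 * g1, mul_mem (mul_mem hg3 hg2) hg1, ?_, ?_⟩
      · rw [Equiv.Perm.mul_apply, Equiv.Perm.mul_apply, hg1a,
          show a + (n - 2) = a + n - 2 by omega, hg2a,
          show a + n - 2 + (n - 1) = a + 2 * n - 3 by omega, hg3a]
        omega
      · intro i hi
        rw [Equiv.Perm.mul_apply, Equiv.Perm.mul_apply, hg1f i hi, hg2f i (by omega),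
          hg3f i (by omega)]

lemma formPerm_conj (σ : Equiv.Perm ℕ) :
    ∀ l : List ℕ, (l.map σ).formPerm = σ * l.formPerm * σ⁻¹
  | [] => by simp
  | [x] => by simp
  | x :: y :: l => by
    have ih := formPerm_conj σ (y :: l)
    simp only [List.map_cons] at ih ⊢
    rw [List.formPerm_cons_cons, List.formPerm_cons_cons, ih, Equiv.swap_apply_apply]
    group

lemma conj_list_prod (g : Equiv.Perm ℕ) :
    ∀ L : List (Equiv.Perm ℕ), g * L.prod * g⁻¹ = (L.map (fun p => g * p * g⁻¹)).prod
  | [] => by simp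
  | p :: L => by
    rw [List.map_cons, List.prod_cons, List.prod_cons, ← conj_list_prod g L]
    group

theorem stmt1 (n : ℕ) (hn : Even n) (hn2 : 2 ≤ n)
    (t : ℕ) (ht : 1 ≤ t) (l : ℕ → ℕ) (hl0 : l 0 = 0)
    (hl : ∀ s < t, l s < l (s + 1))
    (N : ℕ) (hN1 : l t ≤ N) (hN2 : N ≤ l t + 3 * n - 3) :
    ∃ g ∈ C n (l t + 3 * n - 3),
      g * ((List.range t).map
            (fun s => (List.range' (l s + 1) (l (s + 1) - l s)).formPerm)).prod * g⁻¹ =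
        ((List.range (t - 1)).map
            (fun s => (List.range' (l s + 1) (l (s + 1) - l s)).formPerm)).prod *
          (List.range' (l (t - 1) + 1) (l t - l (t - 1) - 1) ++ [N]).formPerm := by
  have hkey : ∀ v, v ≤ t → ∀ u, u ≤ v → l u ≤ l v := by
    intro v
    induction v with
    | zero => intro _ u hu; rw [Nat.le_zero.mp hu]
    | succ v ih =>
      intro hvt u hu
      rcases Nat.le_succ_iff.mp hu with h | h
      · exact le_trans (ih (by omega) u h) (le_of_lt (hl v (by omega)))
      · rw [h]
  have hlt : l (t - 1) < l t := by
    have := hl (t - 1) (by omega)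
    rwa [show t - 1 + 1 = t by omega] at this
  have ha : 1 ≤ l t := by omega
  obtain ⟨g, hgC, hga, hgf⟩ := reach_lemma (Nat.even_iff.mp hn) hn2 (l t) N ha hN1 hN2
  refine ⟨g, hgC, ?_⟩
  have hsplit : List.range t = List.range (t - 1) ++ [t - 1] := by
    rw [← List.range_succ]; congr 1; omega
  rw [hsplit, List.map_append, List.prod_append, List.map_singleton, List.prod_singleton]
  have expand : ∀ A B : Equiv.Perm ℕ, g * (A * B) * g⁻¹ = (g * A * g⁻¹) * (g * B * g⁻¹) := by
    intro A B; group
  rw [expand]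
  have ht'' : t - 1 + 1 = t := by omega
  congr 1
  · rw [conj_list_prod, List.map_map]
    congr 1
    apply List.map_congr_left
    intro s hs
    rw [List.mem_range] at hs
    simp only [Function.comp_apply]
    rw [← formPerm_conj]
    congr 1
    have : ∀ e ∈ List.range' (l s + 1) (l (s + 1) - l s), g e = id e := by
      intro e he
      rw [List.mem_range'_1] at he
      refine hgf e ?_
      have h1 : l (s + 1) ≤ l (t - 1) := hkey (t - 1) (by omega) (s + 1) (by omega)
      omega
    rw [List.map_congr_left this, List.map_id]
  · rw [← formPerm_conj]
    congr 1
    rw [ht'']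
    have hL : List.range' (l (t - 1) + 1) (l t - l (t - 1)) =
        List.range' (l (t - 1) + 1) (l t - l (t - 1) - 1) ++ [l t] := by
      rw [show l t - l (t - 1) = (l t - l (t - 1) - 1) + 1 by omega, List.range'_concat]
      congr 2
      omega
    rw [hL, List.map_append]
    congr 1
    · have : ∀ e ∈ List.range' (l (t - 1) + 1) (l t - l (t - 1) - 1), g e = id e := by
        intro e he
        rw [List.mem_range'_1] at he
        exact hgf e (by omega)
      rw [List.map_congr_left this, List.map_id]
    · simp [hga]
end

section
/- Let n be an even integer with n ≥ 2, let t ≥ 1, and let 0 = l_0 < l_1 < l_2 < ⋯ < l_t be integers. Set m = l_t + 3n − 3 and let τ ∈ S_m be the product of the cycles (1, 2, …, l_1)(l_1+1, …, l_2)⋯(l_{t−1}+1, …, l_t). Then for every strictly increasing sequence of integers 1 ≤ a_1 < a_2 < ⋯ < a_{l_t} ≤ l_t + 3n − 3 there exists g ∈ C(n, m) such that g τ g⁻¹ equals the product of cycles (a_1, …, a_{l_1})(a_{l_1+1}, …, a_{l_2})⋯(a_{l_{t−1}+1}, …, a_{l_t}). -/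
namespace Stmt2Aux

lemma crossPerm_apply (n j i : ℕ) :
    crossPerm n j i = if j ≤ i ∧ i < j + n then 2 * j + n - 1 - i else i := rfl

def cyc3 (x y z : ℕ) : Equiv.Perm ℕ := Equiv.swap x y * Equiv.swap y z

section cyc3
variable {x y z : ℕ}

lemma cyc3_x (hxy : x ≠ y) (hxz : x ≠ z) : cyc3 x y z x = y := by
  simp [cyc3, Equiv.Perm.mul_apply, Equiv.swap_apply_of_ne_of_ne hxy hxz]

lemma cyc3_y (hxz : x ≠ z) (hyz : y ≠ z) : cyc3 x y z y = z := by
  simp [cyc3, Equiv.Perm.mul_apply, Equiv.swap_apply_of_ne_of_ne hxz.symm hyz.symm]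

lemma cyc3_z : cyc3 x y z z = x := by
  rcases eq_or_ne y z with rfl | hyz
  · rcases eq_or_ne x y with rfl | hxy
    · simp [cyc3]
    · simp [cyc3, Equiv.Perm.mul_apply]
  · simp [cyc3, Equiv.Perm.mul_apply, Equiv.swap_apply_right y z]

lemma cyc3_other {w : ℕ} (hx : w ≠ x) (hy : w ≠ y) (hz : w ≠ z) : cyc3 x y z w = w := by
  simp [cyc3, Equiv.Perm.mul_apply, Equiv.swap_apply_of_ne_of_ne hy hz, Equiv.swap_apply_of_ne_of_ne hx hy]

lemma cyc3_apply (hxy : x ≠ y) (hxz : x ≠ z) (hyz : y ≠ z) (i : ℕ) :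
    cyc3 x y z i = if i = x then y else if i = y then z else if i = z then x else i := by
  split_ifs with h1 h2 h3 <;> subst_vars
  · exact cyc3_x hxy hxz
  · exact cyc3_y hxz hyz
  · exact cyc3_z
  · exact cyc3_other h1 h2 h3

lemma cyc3_inv (hxy : x ≠ y) (hxz : x ≠ z) (hyz : y ≠ z) : (cyc3 x y z)⁻¹ = cyc3 z y x := by
  rw [inv_eq_iff_mul_eq_one]
  ext i
  simp only [Equiv.Perm.mul_apply, Equiv.Perm.one_apply,
    cyc3_apply hxy hxz hyz, cyc3_apply (Ne.symm hyz) (Ne.symm hxz) (Ne.symm hxy)]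
  split_ifs <;> omega

end cyc3

lemma cyc3_conj (g : Equiv.Perm ℕ) (x y z : ℕ) :
    g * cyc3 x y z * g⁻¹ = cyc3 (g x) (g y) (g z) := by
  simp only [cyc3, Equiv.swap_apply_apply]
  group

end Stmt2Aux

namespace Stmt2Aux

/-- `cc n j = π_{j+1} π_j`, a cyclic shift by 2 on the window `[j, j+n]`. -/
def cc (n j : ℕ) : Equiv.Perm ℕ := crossPerm n (j+1) * crossPerm n j

lemma cc_apply (n j : ℕ) (hn : 2 ≤ n) (i : ℕ) :
    cc n j i = if j ≤ i ∧ i ≤ j + n then j + ((i - j + 2) % (n+1)) else i := by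
  simp only [cc, Equiv.Perm.mul_apply, crossPerm_apply]
  by_cases h0 : j ≤ i ∧ i ≤ j + n
  · have key : (i - j + 2) % (n+1) = if i < j+n-1 then i-j+2 else if i = j+n-1 then 0 else 1 := by
      split_ifs with h1 h2
      · exact Nat.mod_eq_of_lt (by omega)
      · have h3 : i - j + 2 = n + 1 := by omega
        rw [h3, Nat.mod_self]
      · have h3 : i - j + 2 = (n+1) + 1 := by omega
        rw [h3, Nat.add_mod_left, Nat.mod_eq_of_lt (by omega)]
    rw [if_pos h0, key]
    split_ifs <;> omega
  · rw [if_neg h0]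
    rw [if_neg (show ¬(j ≤ i ∧ i < j + n) by omega), if_neg (by omega)]

lemma cc_pow_apply (n j : ℕ) (hn : 2 ≤ n) (p i : ℕ) (h1 : j ≤ i) (h2 : i ≤ j + n) :
    (cc n j ^ p) i = j + ((i - j + 2*p) % (n+1)) := by
  induction p with
  | zero =>
    rw [pow_zero, Equiv.Perm.one_apply, Nat.mul_zero, Nat.add_zero,
      Nat.mod_eq_of_lt (by omega)]
    omega
  | succ p ih =>
    rw [pow_succ', Equiv.Perm.mul_apply, ih, cc_apply _ _ hn,
      if_pos ⟨Nat.le_add_right _ _, by have := Nat.mod_lt (i - j + 2*p) (show 0 < n+1 by omega); omega⟩]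
    have h3 : j + (i - j + 2 * p) % (n + 1) - j = (i - j + 2*p) % (n+1) := by omega
    rw [h3, Nat.mod_add_mod]
    have h4 : i - j + 2 * (p+1) = i - j + 2*p + 2 := by omega
    rw [h4]

lemma cc_pow_apply_out (n j : ℕ) (hn : 2 ≤ n) (p i : ℕ) (h : ¬ (j ≤ i ∧ i ≤ j + n)) :
    (cc n j ^ p) i = i := by
  induction p with
  | zero => rw [pow_zero, Equiv.Perm.one_apply]
  | succ p ih =>
    rw [pow_succ', Equiv.Perm.mul_apply, ih, cc_apply _ _ hn, if_neg h]

lemma crossPerm_mem (n m j : ℕ) (hnm : n ≤ m) (h1 : 1 ≤ j) (h2 : j + n ≤ m + 1) :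
    crossPerm n j ∈ C n m :=
  Subgroup.subset_closure ⟨j, h1, by omega, rfl⟩

lemma cc_mem (n m j : ℕ) (hnm : n ≤ m) (h1 : 1 ≤ j) (h2 : j + n + 1 ≤ m + 1) :
    cc n j ∈ C n m :=
  mul_mem (crossPerm_mem n m (j+1) hnm (by omega) (by omega))
    (crossPerm_mem n m j hnm h1 (by omega))

end Stmt2Aux

namespace Stmt2Aux

lemma mod_small (n a : ℕ) (h : a ≤ n) : a % (n+1) = a := Nat.mod_eq_of_lt (by omega)

lemma mod_shift (n a : ℕ) (h : a ≤ n) : (n+1+a) % (n+1) = a := by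
  rw [Nat.add_mod_left]; exact mod_small n a h

lemma t_eq (n j : ℕ) (hn : 2 ≤ n) :
    cc n (j+1) * cyc3 j (j+n+1) (j+n-1) = cc n j := by
  have hne1 : j ≠ j+n+1 := by omega
  have hne2 : j ≠ j+n-1 := by omega
  have hne3 : j+n+1 ≠ j+n-1 := by omega
  ext i
  rw [Equiv.Perm.mul_apply, cyc3_apply hne1 hne2 hne3]
  by_cases h1 : i = j
  · rw [if_pos h1, h1, cc_apply _ _ hn, cc_apply _ _ hn, if_pos (by omega), if_pos (by omega)]
    have e1 : j+n+1 - (j+1) + 2 = (n+1) + 1 := by omega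
    have e2 : j - j + 2 = 2 := by omega
    rw [e1, e2, mod_shift n 1 (by omega), mod_small n 2 (by omega)]
  rw [if_neg h1]
  by_cases h2 : i = j+n+1
  · rw [if_pos h2, h2, cc_apply _ _ hn, cc_apply _ _ hn, if_pos (by omega), if_neg (by omega)]
    have e1 : j+n-1 - (j+1) + 2 = n := by omega
    rw [e1, mod_small n n le_rfl]
    omega
  rw [if_neg h2]
  by_cases h3 : i = j+n-1
  · rw [if_pos h3, h3, cc_apply _ _ hn, cc_apply _ _ hn, if_neg (by omega), if_pos (by omega)]
    have e1 : j+n-1 - j + 2 = n + 1 + 0 := by omega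
    rw [e1, mod_shift n 0 (by omega)]
    omega
  rw [if_neg h3, cc_apply _ _ hn, cc_apply _ _ hn]
  by_cases h4 : j ≤ i ∧ i ≤ j + n
  · by_cases h5 : i = j + n
    · rw [h5, if_pos (by omega), if_pos (by omega)]
      have e1 : j + n - (j+1) + 2 = n + 1 + 0 := by omega
      have e2 : j + n - j + 2 = n + 1 + 1 := by omega
      rw [e1, e2, mod_shift n 0 (by omega), mod_shift n 1 (by omega)]
    · -- j+1 ≤ i ≤ j+n-2
      rw [if_pos (by omega), if_pos (by omega)]
      have e1 : i - (j+1) + 2 = i - j + 1 := by omega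
      have e2 : (i - j + 1) % (n+1) = i - j + 1 := mod_small n _ (by omega)
      have e3 : (i - j + 2) % (n+1) = i - j + 2 := mod_small n _ (by omega)
      rw [e1, e2, e3]
      omega
  · rw [if_neg (by omega), if_neg (by omega)]

lemma t_mem (n m j : ℕ) (hn : 2 ≤ n) (hnm : n ≤ m) (h1 : 1 ≤ j) (h2 : j + n + 2 ≤ m + 1) :
    cyc3 j (j+n+1) (j+n-1) ∈ C n m := by
  have h : cyc3 j (j+n+1) (j+n-1) = (cc n (j+1))⁻¹ * cc n j := by
    rw [← t_eq n j hn]; group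
  rw [h]
  exact mul_mem (inv_mem (cc_mem n m (j+1) hnm (by omega) (by omega)))
    (cc_mem n m j hnm h1 (by omega))

end Stmt2Aux

namespace Stmt2Aux

/-- the 3-cycle `i ↦ i+2 ↦ i+1 ↦ i` on consecutive points. -/
def wcyc (i : ℕ) : Equiv.Perm ℕ := cyc3 i (i+2) (i+1)

lemma cyc3_conj_mem {n m : ℕ} (g : Equiv.Perm ℕ) (x y z : ℕ)
    (hg : g ∈ C n m) (hT : cyc3 x y z ∈ C n m) :
    cyc3 (g x) (g y) (g z) ∈ C n m := by
  rw [← cyc3_conj]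
  exact mul_mem (mul_mem hg hT) (inv_mem hg)

lemma wcyc_def (i : ℕ) : wcyc i = cyc3 i (i+2) (i+1) := rfl

lemma wcyc_eq_cc2 (i : ℕ) : wcyc i = cc 2 i := by
  ext x
  rw [wcyc, cyc3_apply (by omega) (by omega) (by omega), cc_apply _ _ (by omega)]
  split_ifs <;> omega

lemma wcyc_base (n m : ℕ) (hn : 4 ≤ n) (hev : Even n) (hm : 2*n + 3 ≤ m) :
    wcyc (n+1) ∈ C n m := by
  obtain ⟨k, hk⟩ := hev
  have hn2 : 2 ≤ n := by omega
  have hnm : n ≤ m := by omega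
  have hT0 : cyc3 n (n+n+1) (n+n-1) ∈ C n m := t_mem n m n hn2 hnm (by omega) (by omega)
  have hg1 : cc n (n+1) ∈ C n m := cc_mem n m (n+1) hnm (by omega) (by omega)
  have A1 : cc n (n+1) n = n := by
    rw [cc_apply _ _ hn2, if_neg (by omega)]
  have A2 : cc n (n+1) (n+n+1) = n+2 := by
    rw [cc_apply _ _ hn2, if_pos (by omega)]
    have e : n+n+1 - (n+1) + 2 = n+1+1 := by omega
    rw [e, mod_shift n 1 (by omega)]
  have A3 : cc n (n+1) (n+n-1) = n+n+1 := by
    rw [cc_apply _ _ hn2, if_pos (by omega)]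
    have e : n+n-1 - (n+1) + 2 = n := by omega
    rw [e, mod_small n n le_rfl]
    omega
  have A4 : cc n (n+1) (n+2) = n+4 := by
    rw [cc_apply _ _ hn2, if_pos (by omega)]
    have e : n+2 - (n+1) + 2 = 3 := by omega
    rw [e, mod_small n 3 (by omega)]
  have hT1 := cyc3_conj_mem (cc n (n+1)) _ _ _ hg1 hT0
  rw [A1, A2, A3] at hT1
  have hT2 := cyc3_conj_mem (cc n (n+1)) _ _ _ hg1 hT1
  rw [A1, A4, A2] at hT2
  -- hT2 : cyc3 n (n+4) (n+2)
  have hg2 : cc n (n+3) ^ k ∈ C n m := pow_mem (cc_mem n m (n+3) hnm (by omega) (by omega)) _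
  have B1 : (cc n (n+3) ^ k) n = n := cc_pow_apply_out n (n+3) hn2 k n (by omega)
  have B2 : (cc n (n+3) ^ k) (n+2) = n+2 := cc_pow_apply_out n (n+3) hn2 k (n+2) (by omega)
  have B3 : (cc n (n+3) ^ k) (n+4) = n+3 := by
    rw [cc_pow_apply n (n+3) hn2 k (n+4) (by omega) (by omega)]
    have e : n+4 - (n+3) + 2*k = n+1+0 := by omega
    rw [e, mod_shift n 0 (by omega)]
  have hT3 := cyc3_conj_mem (cc n (n+3) ^ k) _ _ _ hg2 hT2
  rw [B1, B3, B2] at hT3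
  -- hT3 : cyc3 n (n+3) (n+2)
  have hg3 : cc n 1 ^ (k+1) ∈ C n m := pow_mem (cc_mem n m 1 hnm (by omega) (by omega)) _
  have D1 : (cc n 1 ^ (k+1)) n = n+1 := by
    rw [cc_pow_apply n 1 hn2 (k+1) n (by omega) (by omega)]
    have e : n - 1 + 2*(k+1) = n+1+n := by omega
    rw [e, mod_shift n n le_rfl]
    omega
  have D2 : (cc n 1 ^ (k+1)) (n+3) = n+3 := cc_pow_apply_out n 1 hn2 (k+1) (n+3) (by omega)
  have D3 : (cc n 1 ^ (k+1)) (n+2) = n+2 := cc_pow_apply_out n 1 hn2 (k+1) (n+2) (by omega)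
  have hT4 := cyc3_conj_mem (cc n 1 ^ (k+1)) _ _ _ hg3 hT3
  rw [D1, D2, D3] at hT4
  exact hT4

lemma wcyc_slide_up (n m k i : ℕ) (hn : 2 ≤ n) (hev : Even n) (hnm : n ≤ m)
    (hk1 : 1 ≤ k) (hkm : k + n ≤ m) (hik : k ≤ i) (hin : i + 3 ≤ k + n)
    (h : wcyc i ∈ C n m) : wcyc (i+1) ∈ C n m := by
  obtain ⟨q, hq⟩ := hev
  have hg : cc n k ^ (q+1) ∈ C n m := pow_mem (cc_mem n m k hnm hk1 (by omega)) _
  have e : ∀ x, k ≤ x → x + 1 ≤ k + n → (cc n k ^ (q+1)) x = x + 1 := by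
    intro x hx1 hx2
    rw [cc_pow_apply n k hn _ _ hx1 (by omega)]
    have e2 : x - k + 2*(q+1) = (n+1) + (x - k + 1) := by omega
    rw [e2, mod_shift n _ (by omega)]
    omega
  have hT := cyc3_conj_mem (cc n k ^ (q+1)) _ _ _ hg h
  rw [e i hik (by omega), e (i+2) (by omega) (by omega), e (i+1) (by omega) (by omega)] at hT
  rw [wcyc_def]
  convert hT using 2 <;> omega

lemma wcyc_slide_down (n m k i : ℕ) (hn : 2 ≤ n) (hev : Even n) (hnm : n ≤ m)
    (hk1 : 1 ≤ k) (hkm : k + n ≤ m) (hik : k ≤ i) (hin : i + 3 ≤ k + n)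
    (h : wcyc (i+1) ∈ C n m) : wcyc i ∈ C n m := by
  obtain ⟨q, hq⟩ := hev
  have hg : cc n k ^ q ∈ C n m := pow_mem (cc_mem n m k hnm hk1 (by omega)) _
  have e : ∀ x, k + 1 ≤ x → x ≤ k + n → (cc n k ^ q) x = x - 1 := by
    intro x hx1 hx2
    rw [cc_pow_apply n k hn _ _ (by omega) hx2]
    have e2 : x - k + 2*q = (n+1) + (x - k - 1) := by omega
    rw [e2, mod_shift n _ (by omega)]
    omega
  have hT := cyc3_conj_mem (cc n k ^ q) _ _ _ hg h
  rw [e (i+1) (by omega) (by omega), e (i+1+2) (by omega) (by omega),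
    e (i+1+1) (by omega) (by omega)] at hT
  rw [wcyc_def]
  convert hT using 2 <;> omega

lemma wcyc_mem (n m i : ℕ) (hn2 : 2 ≤ n) (hev : Even n) (hnm : n ≤ m)
    (hm : 2*n + 3 ≤ m ∨ n = 2) (hi1 : 1 ≤ i) (him : i + 2 ≤ m) :
    wcyc i ∈ C n m := by
  have hn4 : 4 ≤ n ∨ n = 2 := by
    obtain ⟨q, hq⟩ := hev; omega
  rcases hn4 with hn4 | rfl
  · have hm' : 2*n+3 ≤ m := by
      rcases hm with h | h
      · exact h
      · omega
    rcases Nat.lt_or_ge 0 1 with _ | _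
    · -- chain argument
      have base := wcyc_base n m hn4 hev hm' 
      have down : ∀ d, 1 ≤ n+1-d → wcyc (n+1-d) ∈ C n m := by
        intro d
        induction d with
        | zero => intro _; simpa using base
        | succ d ih =>
          intro hd
          have hih := ih (by omega)
          have e : n+1-d = (n+1-(d+1)) + 1 := by omega
          rw [e] at hih
          set i' := n+1-(d+1) with hi'
          have hi'1 : 1 ≤ i' := hd
          have hi'n : i' ≤ n := by omega
          by_cases hc : i' + 3 ≤ 1 + n
          · exact wcyc_slide_down n m 1 i' hn2 hev (by omega) le_rfl (by omega) (by omega) hc hih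
          · exact wcyc_slide_down n m (i'+3-n) i' hn2 hev (by omega) (by omega) (by omega)
              (by omega) (by omega) hih
      by_cases hin : i ≤ n + 1
      · have := down (n+1-i) (by omega)
        have e : n+1-(n+1-i) = i := by omega
        rwa [e] at this
      · -- upward induction
        have up : ∀ j, n+1 ≤ j → j + 2 ≤ m → wcyc j ∈ C n m := by
          intro j
          induction j with
          | zero => omega
          | succ j ih =>
            intro hj hjm
            by_cases hj' : n + 1 ≤ j
            · exact wcyc_slide_up n m (j+3-n) j hn2 hev (by omega) (by omega) (by omega)
                (by omega) (by omega) (ih hj' (by omega))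
            · have e : j + 1 = n + 1 := by omega
              rw [e]; exact base
        exact up i (by omega) him
    · omega
  · -- n = 2
    rw [wcyc_eq_cc2]
    exact cc_mem 2 m i hnm hi1 (by omega)

end Stmt2Aux

namespace Stmt2Aux

def fixOut (m : ℕ) : Subgroup (Equiv.Perm ℕ) where
  carrier := {g | ∀ x, x = 0 ∨ m < x → g x = x}
  one_mem' := by intro x _; rfl
  mul_mem' := by
    intro g h hg hh x hx
    rw [Equiv.Perm.mul_apply, hh x hx, hg x hx]
  inv_mem' := by
    intro g hg x hx
    have h1 := hg x hx
    rw [Equiv.Perm.inv_eq_iff_eq]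
    exact h1.symm

lemma C_le_fixOut (n m : ℕ) (hn : 1 ≤ n) (hnm : n ≤ m) : C n m ≤ fixOut m := by
  rw [C, Subgroup.closure_le]
  rintro σ ⟨j, hj1, hj2, rfl⟩ x hx
  rw [crossPerm_apply, if_neg (by omega)]

lemma C_fix {n m : ℕ} (hn : 1 ≤ n) (hnm : n ≤ m) {g : Equiv.Perm ℕ} (hg : g ∈ C n m)
    {x : ℕ} (hx : x = 0 ∨ m < x) : g x = x :=
  C_le_fixOut n m hn hnm hg x hx

lemma C_maps {n m : ℕ} (hn : 1 ≤ n) (hnm : n ≤ m) {g : Equiv.Perm ℕ} (hg : g ∈ C n m)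
    {x : ℕ} (hx1 : 1 ≤ x) (hx2 : x ≤ m) : 1 ≤ g x ∧ g x ≤ m := by
  by_contra hcon
  have hy : g x = 0 ∨ m < g x := by omega
  have h1 : g (g x) = g x := C_fix hn hnm hg hy
  have h2 : g x = x := g.injective h1
  omega

lemma movedown (n m : ℕ) (hn2 : 2 ≤ n) (hev : Even n) (hnm : n ≤ m)
    (hm : 2*n + 3 ≤ m ∨ n = 2) :
    ∀ p i : ℕ, i + 1 ≤ p → p ≤ m → i + 3 ≤ m →
    ∃ σ ∈ C n m, σ p = i + 1 ∧ ∀ q, q ≤ i → σ q = q := by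
  intro p
  induction p using Nat.strong_induction_on with
  | _ p ih =>
    intro i h1 h2 h3
    by_cases hp1 : p = i + 1
    · exact ⟨1, one_mem _, by rw [hp1]; rfl, fun q _ => rfl⟩
    by_cases hp2 : p = i + 2
    · refine ⟨wcyc (i+1), wcyc_mem n m (i+1) hn2 hev hnm hm (by omega) (by omega), ?_, ?_⟩
      · rw [hp2, wcyc_def, cyc3_apply (by omega) (by omega) (by omega)]
        split_ifs <;> omega
      · intro q hq
        rw [wcyc_def, cyc3_other (by omega) (by omega) (by omega)]
    · -- p ≥ i + 3
      have hp3 : i + 3 ≤ p := by omega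
      obtain ⟨σ', hσ'C, hσ'p, hσ'fix⟩ := ih (p-1) (by omega) i (by omega) (by omega) h3
      have hw : wcyc (p-2) ∈ C n m := wcyc_mem n m (p-2) hn2 hev hnm hm (by omega) (by omega)
      refine ⟨σ' * wcyc (p-2), mul_mem hσ'C hw, ?_, ?_⟩
      · have hv : wcyc (p-2) p = p - 1 := by
          rw [wcyc_def, cyc3_apply (by omega) (by omega) (by omega)]
          split_ifs <;> omega
        rw [Equiv.Perm.mul_apply, hv, hσ'p]
      · intro q hq
        have hv : wcyc (p-2) q = q := by
          rw [wcyc_def, cyc3_other (by omega) (by omega) (by omega)]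
        rw [Equiv.Perm.mul_apply, hv, hσ'fix q hq]

lemma formPerm_conj (g : Equiv.Perm ℕ) : ∀ (L : List ℕ) (x : ℕ),
    g * (x :: L).formPerm * g⁻¹ = ((x :: L).map g).formPerm := by
  intro L
  induction L with
  | nil => intro x; simp
  | cons y L ih =>
    intro x
    have h1 : ((x :: y :: L).map g).formPerm
        = Equiv.swap (g x) (g y) * ((y :: L).map g).formPerm := by
      simp [List.formPerm_cons_cons]
    rw [List.formPerm_cons_cons, h1, ← ih y, Equiv.swap_apply_apply]
    group

lemma formPerm_conj' (g : Equiv.Perm ℕ) (L : List ℕ) :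
    g * L.formPerm * g⁻¹ = (L.map g).formPerm := by
  cases L with
  | nil => simp
  | cons x L => exact formPerm_conj g L x

lemma prod_conj (g : Equiv.Perm ℕ) (L : List (Equiv.Perm ℕ)) :
    g * L.prod * g⁻¹ = (L.map (fun σ => g * σ * g⁻¹)).prod := by
  induction L with
  | nil => simp
  | cons σ L ih =>
    rw [List.prod_cons, List.map_cons, List.prod_cons, ← ih]
    group

end Stmt2Aux

namespace Stmt2Aux

lemma sort (n m L : ℕ) (hn2 : 2 ≤ n) (hev : Even n) (hnm : n ≤ m)
    (hm : 2*n + 3 ≤ m ∨ n = 2) (a : ℕ → ℕ)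
    (hstrict : ∀ i j, 1 ≤ i → i < j → j ≤ L → a i < a j)
    (ha1 : 1 ≤ a 1) (haL : a L ≤ m) (hLm : L + 3 ≤ m) (hL1 : 1 ≤ L) :
    ∀ k, k ≤ L → ∃ g ∈ C n m, ∀ j, 1 ≤ j → j ≤ k → g (a j) = j := by
  have hbound : ∀ j, 1 ≤ j → j ≤ L → 1 ≤ a j ∧ a j ≤ m := by
    intro j h1 h2
    constructor
    · rcases eq_or_lt_of_le h1 with h | h
      · exact h ▸ ha1
      · have := hstrict 1 j le_rfl h h2; omega
    · rcases eq_or_lt_of_le h2 with h | h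
      · rw [h]; exact haL
      · have := hstrict j L h1 h le_rfl; omega
  intro k
  induction k with
  | zero => exact fun _ => ⟨1, one_mem _, fun j hj1 hj2 => by omega⟩
  | succ k ihk =>
    intro hk
    obtain ⟨g, hgC, hg⟩ := ihk (by omega)
    have hak1 := hbound (k+1) (by omega) hk
    have hpm := C_maps (by omega) hnm hgC hak1.1 hak1.2
    have hpk : k + 1 ≤ g (a (k+1)) := by
      by_contra hcon
      have hp1 : 1 ≤ g (a (k+1)) := hpm.1
      set p := g (a (k+1)) with hp
      have he : g (a p) = p := hg p (by omega) (by omega)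
      have he2 : a p = a (k+1) := g.injective (by rw [he])
      have := hstrict p (k+1) (by omega) (by omega) hk
      omega
    obtain ⟨σ, hσC, hσp, hσfix⟩ :=
      movedown n m hn2 hev hnm hm (g (a (k+1))) k hpk hpm.2 (by omega)
    refine ⟨σ * g, mul_mem hσC hgC, ?_⟩
    intro j hj1 hj2
    by_cases hj : j = k + 1
    · rw [hj, Equiv.Perm.mul_apply, hσp]
    · rw [Equiv.Perm.mul_apply, hg j hj1 (by omega), hσfix j (by omega)]

end Stmt2Aux

open Stmt2Aux

theorem stmt2 (n : ℕ) (hn : Even n) (hn2 : 2 ≤ n)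
    (t : ℕ) (ht : 1 ≤ t) (l : ℕ → ℕ) (hl0 : l 0 = 0)
    (hl : ∀ s < t, l s < l (s + 1))
    (a : ℕ → ℕ) (ha1 : 1 ≤ a 1)
    (hamono : ∀ i, 1 ≤ i → i < l t → a i < a (i + 1))
    (halast : a (l t) ≤ l t + 3 * n - 3) :
    ∃ g ∈ C n (l t + 3 * n - 3),
      g * ((List.range t).map
            (fun s => (List.range' (l s + 1) (l (s + 1) - l s)).formPerm)).prod * g⁻¹ =
        ((List.range t).map
            (fun s => ((List.range' (l s + 1) (l (s + 1) - l s)).map a).formPerm)).prod := by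
  classical
  have lmono2 : ∀ s s', s ≤ s' → s' ≤ t → l s ≤ l s' := by
    intro s s' h1 h2
    induction s' with
    | zero =>
      have hs0 : s = 0 := by omega
      rw [hs0]
    | succ s' ih =>
      rcases eq_or_lt_of_le h1 with h | h
      · rw [h]
      · have := hl s' (by omega)
        have := ih (by omega) (by omega)
        omega
  have lget : ∀ s, s ≤ t → s ≤ l s := by
    intro s
    induction s with
    | zero => omega
    | succ s ih =>
      intro hs
      have := hl s (by omega)
      have := ih (by omega)
      omega
  have hL1 : 1 ≤ l t := by have := lget t le_rfl; omega
  have hstrict : ∀ i j, 1 ≤ i → i < j → j ≤ l t → a i < a j := by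
    intro i j h1 hij hj
    induction j with
    | zero => omega
    | succ j ihj =>
      by_cases he : i = j
      · subst he
        exact hamono i h1 (by omega)
      · have h5 := ihj (by omega) (by omega)
        have h6 := hamono j (by omega) (by omega)
        omega
  by_cases hLtriv : l t = 1
  · -- t = 1 and everything is trivial
    have ht1 : t = 1 := by have := lget t le_rfl; omega
    subst ht1
    refine ⟨1, one_mem _, ?_⟩
    have e1 : List.range 1 = [0] := by simp [List.range_succ]
    have e2 : List.range' 1 1 = [1] := rfl
    simp [e1, hl0, hLtriv, e2]
  · have hL2 : 2 ≤ l t := by omega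
    set m := l t + 3 * n - 3 with hmdef
    have hnm : n ≤ m := by omega
    have hmdisj : 2*n + 3 ≤ m ∨ n = 2 := by
      obtain ⟨q, hq⟩ := hn
      omega
    obtain ⟨g0, hg0C, hg0⟩ := sort n m (l t) hn2 hn hnm hmdisj a hstrict ha1 halast
      (by omega) (by omega) (l t) le_rfl
    refine ⟨g0⁻¹, inv_mem hg0C, ?_⟩
    have hgval : ∀ j, 1 ≤ j → j ≤ l t → g0⁻¹ j = a j := by
      intro j h1 h2
      rw [Equiv.Perm.inv_eq_iff_eq]
      exact (hg0 j h1 h2).symm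
    rw [prod_conj, List.map_map]
    apply congrArg List.prod
    apply List.map_congr_left
    intro s hs
    have hs' : s < t := List.mem_range.mp hs
    simp only [Function.comp]
    rw [formPerm_conj']
    congr 1
    apply List.map_congr_left
    intro x hx
    rw [List.mem_range'_1] at hx
    have hss := hl s hs'
    have hx2 : x ≤ l (s+1) := by omega
    have hx3 : l (s+1) ≤ l t := lmono2 (s+1) t hs' le_rfl
    exact hgval x (by omega) (by omega)
end

section
/- Let n be an even integer with n ≥ 2, let N ≥ 1, and set m = N + 3n − 3. Let τ ∈ S_m be a permutation whose support (the set of points it does not fix) has cardinality at most N. Then for every σ ∈ S_m having the same cycle type as τ, there exists g ∈ C(n, m) such that g τ g⁻¹ = σ. -/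
namespace CrossAux

open Equiv Equiv.Perm

/-- the 3-cycle sending `a → b → c → a`. -/
def cyc (a b c : ℕ) : Equiv.Perm ℕ := Equiv.swap a b * Equiv.swap b c

lemma cyc_fst {a b c : ℕ} (hab : a ≠ b) (hac : a ≠ c) : cyc a b c a = b := by
  simp only [cyc, Equiv.Perm.mul_apply, Equiv.swap_apply_def]
  split_ifs <;> omega

lemma cyc_snd {a b c : ℕ} (hbc : b ≠ c) (hac : a ≠ c) : cyc a b c b = c := by
  simp only [cyc, Equiv.Perm.mul_apply, Equiv.swap_apply_def]
  split_ifs <;> omega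

lemma cyc_thd {a b c : ℕ} (hbc : b ≠ c) : cyc a b c c = a := by
  simp only [cyc, Equiv.Perm.mul_apply, Equiv.swap_apply_def]
  split_ifs <;> omega

lemma cyc_fix {a b c x : ℕ} (h1 : x ≠ a) (h2 : x ≠ b) (h3 : x ≠ c) : cyc a b c x = x := by
  simp only [cyc, Equiv.Perm.mul_apply, Equiv.swap_apply_def]
  split_ifs <;> omega

lemma cyc_apply_eq {a b c : ℕ} (hab : a ≠ b) (hbc : b ≠ c) (hac : a ≠ c) (x : ℕ) :
    cyc a b c x = if x = a then b else if x = b then c else if x = c then a else x := by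
  simp only [cyc, Equiv.Perm.mul_apply, Equiv.swap_apply_def]
  split_ifs <;> omega

lemma cyc_conj (σ : Equiv.Perm ℕ) (a b c : ℕ) :
    σ * cyc a b c * σ⁻¹ = cyc (σ a) (σ b) (σ c) := by
  unfold cyc
  rw [Equiv.swap_apply_apply σ a b, Equiv.swap_apply_apply σ b c]
  group

lemma cyc_inv (a b c : ℕ) : (cyc a b c)⁻¹ = cyc c b a := by
  unfold cyc
  rw [mul_inv_rev, Equiv.swap_inv, Equiv.swap_inv, Equiv.swap_comm a b, Equiv.swap_comm b c]

lemma cyc_rot {a b c : ℕ} (hab : a ≠ b) (hbc : b ≠ c) (hac : a ≠ c) :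
    cyc a b c = cyc b c a := by
  ext x
  simp only [cyc, Equiv.Perm.mul_apply, Equiv.swap_apply_def]
  split_ifs <;> omega



lemma mem_pi {n m : ℕ} (j : ℕ) (hj : 1 ≤ j) (hj2 : j + n ≤ m + 1) :
    crossPerm n j ∈ C n m :=
  Subgroup.subset_closure ⟨j, hj, by omega, rfl⟩

lemma crossPerm_apply (n j x : ℕ) :
    crossPerm n j x = if j ≤ x ∧ x < j + n then 2 * j + n - 1 - x else x := rfl

/-- shift by 2 on the window `[j, j+n]`. -/
def cshift (n j : ℕ) : Equiv.Perm ℕ := crossPerm n (j + 1) * crossPerm n j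

lemma cshift_mem {n m : ℕ} (j : ℕ) (hj : 1 ≤ j) (hj2 : j + n ≤ m) :
    cshift n j ∈ C n m :=
  mul_mem (mem_pi (j + 1) (by omega) (by omega)) (mem_pi j hj (by omega))

lemma modsmall (M a : ℕ) (h : a < 2 * M) :
    a % M = if a < M then a else a - M := by
  split_ifs with h1
  · exact Nat.mod_eq_of_lt h1
  · rw [Nat.mod_eq_sub_mod (le_of_not_gt h1), Nat.mod_eq_of_lt (by omega)]

lemma cshift_apply {n : ℕ} (h2 : 2 ≤ n) (j x : ℕ) :
    cshift n j x = if j ≤ x ∧ x ≤ j + n then j + (x - j + 2) % (n + 1) else x := by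
  by_cases hx : j ≤ x ∧ x ≤ j + n
  · rw [if_pos hx, modsmall (n+1) _ (by omega)]
    simp only [cshift, Equiv.Perm.mul_apply, crossPerm_apply]
    split_ifs <;> omega
  · rw [if_neg hx]
    simp only [cshift, Equiv.Perm.mul_apply, crossPerm_apply]
    split_ifs <;> omega

lemma cshift_pow_apply {n : ℕ} (h2 : 2 ≤ n) (j k x : ℕ) :
    (cshift n j ^ k) x = if j ≤ x ∧ x ≤ j + n then j + (x - j + 2 * k) % (n + 1) else x := by
  induction k generalizing x with
  | zero =>
      by_cases hx : j ≤ x ∧ x ≤ j + n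
      · rw [pow_zero, if_pos hx, Nat.mod_eq_of_lt (by omega)]
        simp only [Equiv.Perm.one_apply]
        omega
      · rw [pow_zero, if_neg hx]; rfl
  | succ k ih =>
      rw [pow_succ, Equiv.Perm.mul_apply, cshift_apply h2]
      by_cases hx : j ≤ x ∧ x ≤ j + n
      · rw [if_pos hx, if_pos hx, ih]
        have hlt : (x - j + 2) % (n + 1) < n + 1 := Nat.mod_lt _ (by omega)
        rw [if_pos (by omega)]
        have h9 : j + (x - j + 2) % (n + 1) - j = (x - j + 2) % (n + 1) := by omega
        rw [h9, Nat.mod_add_mod]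
        congr 2
        omega
      · rw [if_neg hx, if_neg hx, ih, if_neg hx]

/-- the word `π_{j+2} π_{j+1} π_j π_{j+1}`, equal to the 3-cycle `(j, j+n+1, j+2)`. -/
def eWord (n j : ℕ) : Equiv.Perm ℕ :=
  crossPerm n (j + 2) * crossPerm n (j + 1) * crossPerm n j * crossPerm n (j + 1)

lemma eWord_mem {n m : ℕ} (j : ℕ) (hj : 1 ≤ j) (hj2 : j + n + 1 ≤ m) :
    eWord n j ∈ C n m :=
  mul_mem (mul_mem (mul_mem (mem_pi _ (by omega) (by omega)) (mem_pi _ (by omega) (by omega)))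
    (mem_pi _ hj (by omega))) (mem_pi _ (by omega) (by omega))

lemma eWord_eq {n : ℕ} (h2 : 2 ≤ n) (j : ℕ) :
    eWord n j = cyc j (j + n + 1) (j + 2) := by
  ext x
  simp only [eWord, cyc, Equiv.Perm.mul_apply, crossPerm_apply, Equiv.swap_apply_def]
  split_ifs <;> omega


lemma conj_mem {G : Type*} [Group G] {H : Subgroup G} {u g : G} (hu : u ∈ H) (hg : g ∈ H) :
    u * g * u⁻¹ ∈ H := mul_mem (mul_mem hu hg) (inv_mem hu)

lemma inv_cyc_mem {n m a b c : ℕ} (hab : a ≠ b) (hbc : b ≠ c) (hac : a ≠ c)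
    (h : cyc a b c ∈ C n m) : cyc a c b ∈ C n m := by
  have h1 := inv_mem h
  rw [cyc_inv] at h1
  rwa [cyc_rot (Ne.symm hbc) (Ne.symm hab) (Ne.symm hac),
    cyc_rot (Ne.symm hab) hac hbc] at h1

section families

variable {n m : ℕ} (hn : Even n) (h2 : 2 ≤ n) (hm : 3 * n ≤ m + 2)

include hn h2 in
lemma F_mem (j : ℕ) (hj : 1 ≤ j) (hj2 : j + n + 1 ≤ m) :
    cyc j (j + 1) (j + 3) ∈ C n m := by
  obtain ⟨t, ht⟩ := hn
  set u : Equiv.Perm ℕ := cshift n (j + 1) ^ (n / 2 + 1) with hu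
  have humem : u ∈ C n m := pow_mem (cshift_mem (j + 1) (by omega) (by omega)) _
  have h1 : u j = j := by
    rw [hu, cshift_pow_apply h2, if_neg (by omega)]
  have h3 : u (j + n + 1) = j + 1 := by
    rw [hu, cshift_pow_apply h2, if_pos (by omega)]
    have : j + n + 1 - (j + 1) + 2 * (n / 2 + 1) = 2 * (n + 1) := by omega
    rw [this, Nat.mul_mod_left]
  have h4 : u (j + 2) = j + 3 := by
    rw [hu, cshift_pow_apply h2, if_pos (by omega)]
    rw [modsmall _ _ (by omega), if_neg (by omega)]
    omega
  have key : u * cyc j (j + n + 1) (j + 2) * u⁻¹ = cyc j (j + 1) (j + 3) := by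
    rw [cyc_conj, h1, h3, h4]
  rw [← key, ← eWord_eq h2]
  exact conj_mem humem (eWord_mem j hj hj2)

include hn h2 in
lemma G_mem (b : ℕ) (hb : n ≤ b + 1) (hb2 : b + 3 ≤ m) :
    cyc b (b + 3) (b + 2) ∈ C n m := by
  obtain ⟨t, ht⟩ := hn
  set j : ℕ := b + 2 - n with hjdef
  have hj1 : 1 ≤ j := by omega
  have hjn : j + n = b + 2 := by omega
  set u : Equiv.Perm ℕ := cshift n j ^ (n / 2 - 1) with hu
  have humem : u ∈ C n m := pow_mem (cshift_mem j hj1 (by omega)) _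
  have h1 : u j = b := by
    rw [hu, cshift_pow_apply h2, if_pos (by omega)]
    rw [modsmall _ _ (by omega), if_pos (by omega)]
    omega
  have h3 : u (j + n + 1) = b + 3 := by
    rw [hu, cshift_pow_apply h2, if_neg (by omega)]
    omega
  have h4 : u (j + 2) = b + 2 := by
    rw [hu, cshift_pow_apply h2, if_pos (by omega)]
    rw [modsmall _ _ (by omega), if_pos (by omega)]
    omega
  have key : u * cyc j (j + n + 1) (j + 2) * u⁻¹ = cyc b (b + 3) (b + 2) := by
    rw [cyc_conj, h1, h3, h4]
  rw [← key, ← eWord_eq h2]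
  exact conj_mem humem (eWord_mem j hj1 (by omega))

include hn h2 hm in
lemma Fhat (a : ℕ) (ha : 1 ≤ a) (ha2 : a + 3 ≤ m) :
    cyc a (a + 1) (a + 3) ∈ C n m := by
  by_cases h : a + n + 1 ≤ m
  · exact F_mem hn h2 a ha h
  · -- a is large: a ≥ m - n ≥ 2n - 2
    have hbig : m < a + n + 1 := by omega
    have hga : n ≤ a + 1 := by omega
    have hga' : n ≤ a - 1 + 1 := by omega
    have hg : cyc a (a + 3) (a + 2) ∈ C n m := G_mem hn h2 a hga ha2
    have hu : cyc (a - 1) (a + 2) (a + 1) ∈ C n m := by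
      have := G_mem (n := n) (m := m) hn h2 (a - 1) hga' (by omega)
      have e1 : a - 1 + 3 = a + 2 := by omega
      have e2 : a - 1 + 2 = a + 1 := by omega
      rwa [e1, e2] at this
    have h1 : cyc (a - 1) (a + 2) (a + 1) a = a := cyc_fix (by omega) (by omega) (by omega)
    have h3 : cyc (a - 1) (a + 2) (a + 1) (a + 3) = a + 3 :=
      cyc_fix (by omega) (by omega) (by omega)
    have h4 : cyc (a - 1) (a + 2) (a + 1) (a + 2) = a + 1 := cyc_snd (by omega) (by omega)
    have key : cyc (a - 1) (a + 2) (a + 1) * cyc a (a + 3) (a + 2) *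
        (cyc (a - 1) (a + 2) (a + 1))⁻¹ = cyc a (a + 3) (a + 1) := by
      rw [cyc_conj, h1, h3, h4]
    have : cyc a (a + 3) (a + 1) ∈ C n m := key ▸ conj_mem hu hg
    exact inv_cyc_mem (by omega) (by omega) (by omega) this

include hn h2 hm in
lemma Ghat (a : ℕ) (ha : 1 ≤ a) (ha2 : a + 3 ≤ m) :
    cyc a (a + 3) (a + 2) ∈ C n m := by
  by_cases h : n ≤ a + 1
  · exact G_mem hn h2 a h ha2
  · -- a ≤ n - 2
    have hf : cyc a (a + 1) (a + 3) ∈ C n m := F_mem hn h2 a ha (by omega)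
    have hu : cyc (a + 1) (a + 2) (a + 4) ∈ C n m := F_mem hn h2 (a + 1) (by omega) (by omega)
    have h1 : cyc (a + 1) (a + 2) (a + 4) a = a := cyc_fix (by omega) (by omega) (by omega)
    have h3 : cyc (a + 1) (a + 2) (a + 4) (a + 1) = a + 2 := cyc_fst (by omega) (by omega)
    have h4 : cyc (a + 1) (a + 2) (a + 4) (a + 3) = a + 3 :=
      cyc_fix (by omega) (by omega) (by omega)
    have key : cyc (a + 1) (a + 2) (a + 4) * cyc a (a + 1) (a + 3) *
        (cyc (a + 1) (a + 2) (a + 4))⁻¹ = cyc a (a + 2) (a + 3) := by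
      rw [cyc_conj, h1, h3, h4]
    have : cyc a (a + 2) (a + 3) ∈ C n m := key ▸ conj_mem hu hf
    exact inv_cyc_mem (by omega) (by omega) (by omega) this

include hn h2 hm in
lemma K_mem (j : ℕ) (hj : 1 ≤ j) (hj2 : j + 2 ≤ m) :
    cyc j (j + 1) (j + 2) ∈ C n m := by
  by_cases h : j + 3 ≤ m
  · -- product A * B with A = cyc j (j+3) (j+1), B = cyc j (j+2) (j+3)
    have hA : cyc j (j + 3) (j + 1) ∈ C n m :=
      inv_cyc_mem (by omega) (by omega) (by omega) (Fhat hn h2 hm j hj h)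
    have hB : cyc j (j + 2) (j + 3) ∈ C n m :=
      inv_cyc_mem (by omega) (by omega) (by omega) (Ghat hn h2 hm j hj h)
    have key : cyc j (j + 3) (j + 1) * cyc j (j + 2) (j + 3) = cyc j (j + 2) (j + 1) := by
      ext x
      rw [Equiv.Perm.mul_apply, cyc_apply_eq (by omega) (by omega) (by omega),
        cyc_apply_eq (by omega) (by omega) (by omega),
        cyc_apply_eq (by omega) (by omega) (by omega)]
      split_ifs <;> omega
    have : cyc j (j + 2) (j + 1) ∈ C n m := key ▸ mul_mem hA hB
    exact inv_cyc_mem (by omega) (by omega) (by omega) this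
  · -- j + 2 = m; use the pair at j - 1
    have hj4 : 2 ≤ j := by omega
    set i : ℕ := j - 1 with hidef
    have hi3 : i + 3 ≤ m := by omega
    have hA : cyc i (i + 1) (i + 3) ∈ C n m := Fhat hn h2 hm i (by omega) hi3
    have hB : cyc i (i + 3) (i + 2) ∈ C n m := Ghat hn h2 hm i (by omega) hi3
    have key : cyc i (i + 1) (i + 3) * cyc i (i + 3) (i + 2) =
        cyc (i + 1) (i + 3) (i + 2) := by
      ext x
      rw [Equiv.Perm.mul_apply, cyc_apply_eq (by omega) (by omega) (by omega),
        cyc_apply_eq (by omega) (by omega) (by omega),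
        cyc_apply_eq (by omega) (by omega) (by omega)]
      split_ifs <;> omega
    have hP : cyc (i + 1) (i + 3) (i + 2) ∈ C n m := key ▸ mul_mem hA hB
    have := inv_cyc_mem (by omega) (by omega) (by omega) hP
    have e1 : i + 1 = j := by omega
    have e2 : i + 2 = j + 1 := by omega
    have e3 : i + 3 = j + 2 := by omega
    rwa [e1, e2, e3] at this


include hn h2 hm in
lemma triple_mem : ∀ d a b c : ℕ, c - a ≤ d → 1 ≤ a → a < b → b < c → c ≤ m →
    cyc a b c ∈ C n m := by
  intro d
  induction d with
  | zero => intro a b c h1 _ h3 h4 _; omega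
  | succ d ih =>
    intro a b c hd ha hab hbc hcm
    by_cases hc2 : c = a + 2
    · have hb : b = a + 1 := by omega
      subst hb; subst hc2
      exact K_mem hn h2 hm a ha (by omega)
    by_cases hc3 : c = a + 3
    · subst hc3
      rcases (by omega : b = a + 1 ∨ b = a + 2) with hb | hb <;> subst hb
      · exact Fhat hn h2 hm a ha hcm
      · exact inv_cyc_mem (by omega) (by omega) (by omega) (Ghat hn h2 hm a ha hcm)
    have hc4 : a + 4 ≤ c := by omega
    have hbase : cyc a (a + 1) c ∈ C n m := by
      have h1 : cyc a (a + 1) (c - 1) ∈ C n m :=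
        ih a (a + 1) (c - 1) (by omega) ha (by omega) (by omega) (by omega)
      have hu : cyc (c - 2) (c - 1) c ∈ C n m := by
        have := K_mem hn h2 hm (c - 2) (by omega) (by omega)
        rwa [show c - 2 + 1 = c - 1 by omega, show c - 2 + 2 = c by omega] at this
      have e1 : cyc (c - 2) (c - 1) c a = a := cyc_fix (by omega) (by omega) (by omega)
      have e2 : cyc (c - 2) (c - 1) c (a + 1) = a + 1 := cyc_fix (by omega) (by omega) (by omega)
      have e3 : cyc (c - 2) (c - 1) c (c - 1) = c := cyc_snd (by omega) (by omega)
      have key : cyc (c - 2) (c - 1) c * cyc a (a + 1) (c - 1) * (cyc (c - 2) (c - 1) c)⁻¹ =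
          cyc a (a + 1) c := by
        rw [cyc_conj, e1, e2, e3]
      exact key ▸ conj_mem hu h1
    rcases eq_or_ne b (a + 1) with hb1 | hb1
    · subst hb1; exact hbase
    · obtain ⟨w, hw1, hw2, hw3, hwmem⟩ :
          ∃ w, a + 2 ≤ w ∧ w + 1 ≤ c ∧ w ≠ b ∧ cyc (a + 1) b w ∈ C n m := by
        by_cases hb2 : b = a + 2
        · refine ⟨a + 3, by omega, by omega, by omega, ?_⟩
          subst hb2
          exact ih (a + 1) (a + 2) (a + 3) (by omega) (by omega) (by omega) (by omega)
            (by omega)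
        · refine ⟨a + 2, by omega, by omega, by omega, ?_⟩
          have hs : cyc (a + 1) (a + 2) b ∈ C n m :=
            ih (a + 1) (a + 2) b (by omega) (by omega) (by omega) (by omega) (by omega)
          exact inv_cyc_mem (by omega) (by omega) (by omega) hs
      have e1 : cyc (a + 1) b w a = a := cyc_fix (by omega) (by omega) (by omega)
      have e2 : cyc (a + 1) b w (a + 1) = b := cyc_fst (by omega) (by omega)
      have e3 : cyc (a + 1) b w c = c := cyc_fix (by omega) (by omega) (by omega)
      have key : cyc (a + 1) b w * cyc a (a + 1) c * (cyc (a + 1) b w)⁻¹ = cyc a b c := by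
        rw [cyc_conj, e1, e2, e3]
      exact key ▸ conj_mem hwmem hbase

include hn h2 hm in
lemma cyc_mem_any {x y z : ℕ} (hxy : x ≠ y) (hyz : y ≠ z) (hxz : x ≠ z)
    (h1x : 1 ≤ x) (h1y : 1 ≤ y) (h1z : 1 ≤ z) (hx : x ≤ m) (hy : y ≤ m) (hz : z ≤ m) :
    cyc x y z ∈ C n m := by
  have T : ∀ a b c : ℕ, 1 ≤ a → a < b → b < c → c ≤ m → cyc a b c ∈ C n m :=
    fun a b c u1 u2 u3 u4 => triple_mem hn h2 hm (c - a) a b c le_rfl u1 u2 u3 u4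
  rcases (by omega : (x < y ∧ x < z) ∨ (y < x ∧ y < z) ∨ (z < x ∧ z < y)) with h | h | h
  · rcases (by omega : y < z ∨ z < y) with h' | h'
    · exact T x y z h1x h.1 h' hz
    · exact inv_cyc_mem hxz (Ne.symm hyz) hxy (T x z y h1x h.2 h' hy)
  · rw [cyc_rot hxy hyz hxz]
    rcases (by omega : z < x ∨ x < z) with h' | h'
    · exact T y z x h1y h.2 h' hx
    · exact inv_cyc_mem (Ne.symm hxy) hxz hyz (T y x z h1y h.1 h' hz)
  · rw [cyc_rot hxy hyz hxz, cyc_rot hyz (Ne.symm hxz) (Ne.symm hxy)]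
    rcases (by omega : x < y ∨ y < x) with h' | h'
    · exact T z x y h1z h.1 h' hy
    · exact inv_cyc_mem (Ne.symm hyz) (Ne.symm hxy) (Ne.symm hxz) (T z y x h1z h.2 h' hx)

end families

section final

variable {n m : ℕ} (hn : Even n) (h2 : 2 ≤ n) (hm : 3 * n ≤ m + 2)

include hn h2 hm in
lemma ofSubtype_threeCycle_mem (t : Equiv.Perm ↑(Finset.Icc 1 m))
    (ht : Equiv.Perm.IsThreeCycle t) : Equiv.Perm.ofSubtype t ∈ C n m := by
  have h3 : t.support.card = 3 := ht.card_support
  obtain ⟨a, ha⟩ : t.support.Nonempty := Finset.card_pos.1 (by omega)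
  obtain ⟨b, hbdef⟩ : ∃ b, t a = b := ⟨_, rfl⟩
  obtain ⟨c, hcdef⟩ : ∃ c, t b = c := ⟨_, rfl⟩
  have hab : t a ≠ a := Equiv.Perm.mem_support.1 ha
  have hbsup : b ∈ t.support := hbdef ▸ Equiv.Perm.apply_mem_support.2 ha
  have hbc : t b ≠ b := Equiv.Perm.mem_support.1 hbsup
  have h3' : t ^ 3 = 1 := by rw [← ht.orderOf]; exact pow_orderOf_eq_one t
  have htc : t c = a := by
    have h9 : (t ^ 3) a = a := by rw [h3']; rfl
    have h10 : t (t (t a)) = a := by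
      simpa [pow_succ, Equiv.Perm.mul_apply] using h9
    rwa [hbdef, hcdef] at h10
  have hba : b ≠ a := by rw [← hbdef]; exact hab
  have hcb : c ≠ b := by rw [← hcdef]; exact hbc
  have hca : c ≠ a := by
    intro h
    exact hab (h ▸ htc)
  have hsub : ({a, b, c} : Finset _) ⊆ t.support := by
    intro x hx
    simp only [Finset.mem_insert, Finset.mem_singleton] at hx
    rcases hx with rfl | rfl | rfl
    · exact ha
    · exact hbsup
    · rw [Equiv.Perm.mem_support, htc]
      exact Ne.symm hca
  have hcard : ({a, b, c} : Finset _).card = 3 := by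
    rw [Finset.card_insert_of_notMem (by simp [Ne.symm hba, Ne.symm hca]),
      Finset.card_insert_of_notMem (by simp [Ne.symm hcb]), Finset.card_singleton]
  have hsupport : t.support = {a, b, c} :=
    (Finset.eq_of_subset_of_card_le hsub (by omega)).symm
  have ht_eq : t = Equiv.swap a b * Equiv.swap b c := by
    ext x
    rcases eq_or_ne x a with rfl | hxa
    · rw [Equiv.Perm.mul_apply, Equiv.swap_apply_of_ne_of_ne (Ne.symm hba) (Ne.symm hca),
        Equiv.swap_apply_left, hbdef]
    rcases eq_or_ne x b with rfl | hxb
    · rw [Equiv.Perm.mul_apply, Equiv.swap_apply_left,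
        Equiv.swap_apply_of_ne_of_ne hca hcb, hcdef]
    rcases eq_or_ne x c with rfl | hxc
    · rw [Equiv.Perm.mul_apply, Equiv.swap_apply_right, Equiv.swap_apply_right, htc]
    · have hxsup : x ∉ t.support := by
        rw [hsupport]
        simp [hxa, hxb, hxc]
      rw [Equiv.Perm.notMem_support.1 hxsup, Equiv.Perm.mul_apply,
        Equiv.swap_apply_of_ne_of_ne hxb hxc, Equiv.swap_apply_of_ne_of_ne hxa hxb]
  have hof : Equiv.Perm.ofSubtype t = cyc (a : ℕ) (b : ℕ) (c : ℕ) := by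
    rw [ht_eq, map_mul, Equiv.Perm.ofSubtype_swap_eq, Equiv.Perm.ofSubtype_swap_eq]
    rfl
  rw [hof]
  have hma := Finset.mem_Icc.1 a.2
  have hmb := Finset.mem_Icc.1 b.2
  have hmc := Finset.mem_Icc.1 c.2
  exact cyc_mem_any hn h2 hm (fun e => hba (Subtype.ext e.symm)) (fun e => hcb (Subtype.ext e.symm))
    (fun e => hca (Subtype.ext e.symm)) hma.1 hmb.1 hmc.1 hma.2 hmb.2 hmc.2

include hn h2 hm in
lemma even_mem (g : Equiv.Perm ℕ)
    (hiff : ∀ x : ℕ, x ∈ Finset.Icc 1 m ↔ g x ∈ Finset.Icc 1 m)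
    (hsupp : ∀ i : ℕ, g i ≠ i → i ∈ Finset.Icc 1 m)
    (hsign : Equiv.Perm.sign (g.subtypePerm (fun x => (hiff x).symm)) = 1) : g ∈ C n m := by
  have hrepr : Equiv.Perm.ofSubtype (g.subtypePerm (fun x => (hiff x).symm)) = g :=
    Equiv.Perm.ofSubtype_subtypePerm (fun x => (hiff x).symm) hsupp
  have halt : g.subtypePerm (fun x => (hiff x).symm) ∈ alternatingGroup ↑(Finset.Icc 1 m) :=
    Equiv.Perm.mem_alternatingGroup.2 hsign
  rw [← Equiv.Perm.closure_three_cycles_eq_alternating] at halt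
  rw [← hrepr]
  refine Subgroup.closure_induction (p := fun x _ => Equiv.Perm.ofSubtype x ∈ C n m)
    (fun x hx => ofSubtype_threeCycle_mem hn h2 hm x hx)
    ?_ ?_ ?_ halt
  · show Equiv.Perm.ofSubtype (1 : Equiv.Perm ↑(Finset.Icc 1 m)) ∈ C n m
    rw [map_one]; exact one_mem _
  · intro x y hx hy px py
    show Equiv.Perm.ofSubtype (x * y) ∈ C n m
    rw [map_mul]
    exact mul_mem px py
  · intro x hx px
    show Equiv.Perm.ofSubtype x⁻¹ ∈ C n m
    rw [map_inv]
    exact inv_mem px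

end final

end CrossAux

open CrossAux in
theorem stmt3 (n : ℕ) (hn : Even n) (hn2 : 2 ≤ n) (N : ℕ) (hN : 1 ≤ N)
    (τ σ : Equiv.Perm ℕ)
    (hτsupp : ∀ i, τ i ≠ i → 1 ≤ i ∧ i ≤ N + 3 * n - 3)
    (hτsize : {i | τ i ≠ i}.ncard ≤ N)
    (hσsupp : ∀ i, σ i ≠ i → 1 ≤ i ∧ i ≤ N + 3 * n - 3)
    (hcycleType : ∃ h : Equiv.Perm ℕ,
      (∀ i, h i ≠ i → 1 ≤ i ∧ i ≤ N + 3 * n - 3) ∧ h * τ * h⁻¹ = σ) :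
    ∃ g ∈ C n (N + 3 * n - 3), g * τ * g⁻¹ = σ := by
  obtain ⟨h, hhsupp, hhconj⟩ := hcycleType
  set m := N + 3 * n - 3 with hmdef
  have hm3 : 3 * n ≤ m + 2 := by omega
  have mk : ∀ (g : Equiv.Perm ℕ), (∀ i, g i ≠ i → 1 ≤ i ∧ i ≤ m) →
      ∀ x : ℕ, x ∈ Finset.Icc 1 m ↔ g x ∈ Finset.Icc 1 m := by
    intro g hg x
    by_cases hfix : g x = x
    · rw [hfix]
    · have h1 := hg x hfix
      have h2 : g (g x) ≠ g x := fun e => hfix (g.injective e)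
      have h3 := hg (g x) h2
      exact ⟨fun _ => Finset.mem_Icc.2 ⟨h3.1, h3.2⟩, fun _ => Finset.mem_Icc.2 ⟨h1.1, h1.2⟩⟩
  -- find two fixed points of τ inside the interval
  have hsetEq : {i : ℕ | τ i ≠ i} = ↑((Finset.Icc 1 m).filter fun i => τ i ≠ i) := by
    ext i
    simp only [Set.mem_setOf_eq, Finset.coe_filter, Finset.mem_Icc, Set.mem_setOf_eq]
    exact ⟨fun hi => ⟨hτsupp i hi, hi⟩, fun hi => hi.2⟩
  have hcard1 : ((Finset.Icc 1 m).filter fun i => τ i ≠ i).card ≤ N := by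
    rw [← Set.ncard_coe_finset, ← hsetEq]
    exact hτsize
  have hcard2 : 1 < ((Finset.Icc 1 m).filter fun i => τ i = i).card := by
    have htot := Finset.card_filter_add_card_filter_not
      (s := Finset.Icc 1 m) (p := fun i => τ i = i)
    have hIcc : (Finset.Icc 1 m).card = m := by rw [Nat.card_Icc]; omega
    have hle : ((Finset.Icc 1 m).filter fun i => ¬ τ i = i).card ≤ N := hcard1
    omega
  obtain ⟨x, hx, y, hy, hxy⟩ := Finset.one_lt_card.1 hcard2
  simp only [Finset.mem_filter, Finset.mem_Icc] at hx hy
  have hxmem : x ∈ Finset.Icc 1 m := Finset.mem_Icc.2 ⟨hx.1.1, hx.1.2⟩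
  have hymem : y ∈ Finset.Icc 1 m := Finset.mem_Icc.2 ⟨hy.1.1, hy.1.2⟩
  have hhiff := mk h hhsupp
  rcases Int.units_eq_one_or (Equiv.Perm.sign (h.subtypePerm (fun x => (hhiff x).symm))) with hs | hs
  · exact ⟨h, even_mem hn hn2 hm3 h hhiff
      (fun i hi => Finset.mem_Icc.2 (hhsupp i hi)) hs, hhconj⟩
  · have hssupp : ∀ i, Equiv.swap x y i ≠ i → 1 ≤ i ∧ i ≤ m := by
      intro i hi
      rcases (Equiv.swap_apply_ne_self_iff.1 hi).2 with rfl | rfl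
      · exact ⟨hx.1.1, hx.1.2⟩
      · exact ⟨hy.1.1, hy.1.2⟩
    have hgsupp : ∀ i, (h * Equiv.swap x y) i ≠ i → 1 ≤ i ∧ i ≤ m := by
      intro i hi
      by_cases hsi : Equiv.swap x y i = i
      · apply hhsupp
        rw [Equiv.Perm.mul_apply, hsi] at hi
        exact hi
      · exact hssupp i hsi
    have hgiff := mk (h * Equiv.swap x y) hgsupp
    have hsiff := mk (Equiv.swap x y) hssupp
    refine ⟨h * Equiv.swap x y, ?_, ?_⟩
    · apply even_mem hn hn2 hm3 (h * Equiv.swap x y) hgiff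
        (fun i hi => Finset.mem_Icc.2 (hgsupp i hi))
      have hsplit : (h * Equiv.swap x y).subtypePerm (fun x => (hgiff x).symm) =
          h.subtypePerm (fun x => (hhiff x).symm) * (Equiv.swap x y).subtypePerm (fun x => (hsiff x).symm) := rfl
      have hswap : (Equiv.swap x y).subtypePerm (fun x => (hsiff x).symm) =
          Equiv.swap (⟨x, hxmem⟩ : ↑(Finset.Icc 1 m)) ⟨y, hymem⟩ := by
        apply Equiv.ext
        rintro ⟨i, hi⟩
        rcases eq_or_ne i x with rfl | hix
        · rw [show (⟨i, hi⟩ : ↑(Finset.Icc 1 m)) = ⟨i, hxmem⟩ from rfl,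
            Equiv.swap_apply_left]
          apply Subtype.ext
          simp [Equiv.Perm.subtypePerm_apply]
        rcases eq_or_ne i y with rfl | hiy
        · rw [show (⟨i, hi⟩ : ↑(Finset.Icc 1 m)) = ⟨i, hymem⟩ from rfl,
            Equiv.swap_apply_right]
          apply Subtype.ext
          simp [Equiv.Perm.subtypePerm_apply]
        · rw [Equiv.swap_apply_of_ne_of_ne (fun e => hix (congrArg Subtype.val e))
            (fun e => hiy (congrArg Subtype.val e))]
          apply Subtype.ext
          simp [Equiv.Perm.subtypePerm_apply, Equiv.swap_apply_of_ne_of_ne hix hiy]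
      rw [hsplit, map_mul, hs, hswap, Equiv.Perm.sign_swap
        (fun e => hxy (congrArg Subtype.val e))]
      decide
    · have hcomm : Equiv.swap x y * τ = τ * Equiv.swap x y := by
        ext i
        simp only [Equiv.Perm.mul_apply]
        rcases eq_or_ne i x with rfl | hix
        · rw [hx.2, Equiv.swap_apply_left, hy.2]
        rcases eq_or_ne i y with rfl | hiy
        · rw [hy.2, Equiv.swap_apply_right, hx.2]
        · have hτix : τ i ≠ x := fun e => hix (τ.injective (by rw [e, hx.2]))
          have hτiy : τ i ≠ y := fun e => hiy (τ.injective (by rw [e, hy.2]))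
          rw [Equiv.swap_apply_of_ne_of_ne hix hiy,
            Equiv.swap_apply_of_ne_of_ne hτix hτiy]
      have hsts : Equiv.swap x y * τ * (Equiv.swap x y)⁻¹ = τ := by
        rw [hcomm]
        group
      calc h * Equiv.swap x y * τ * (h * Equiv.swap x y)⁻¹
          = h * (Equiv.swap x y * τ * (Equiv.swap x y)⁻¹) * h⁻¹ := by
            rw [mul_inv_rev]; group
        _ = σ := by rw [hsts, hhconj]
end

section
/- Let n be an even integer with n ≥ 2 and let m be an integer with m ≥ 5n/2 − 1. Then the permutation (1, n)(2n−1, 2n) — the product of the transposition exchanging 1 and n with the transposition exchanging 2n−1 and 2n — belongs to the subgroup C(n, m) of S_m generated by the n-crossing permutations. -/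
lemma crossPerm_spec (n j i : ℕ) :
    (j ≤ i ∧ i < j + n ∧ crossPerm n j i + i = 2 * j + n - 1) ∨
    ((i < j ∨ j + n ≤ i) ∧ crossPerm n j i = i) := by
  have : crossPerm n j i = crossFun n j i := rfl
  rw [this]
  unfold crossFun
  split_ifs with h
  · left; omega
  · right; omega

lemma swap_spec (a b i : ℕ) :
    (i = a ∧ Equiv.swap a b i = b) ∨ (i = b ∧ Equiv.swap a b i = a) ∨
    (i ≠ a ∧ i ≠ b ∧ Equiv.swap a b i = i) := by
  rcases eq_or_ne i a with h | h
  · left; simp [h]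
  · rcases eq_or_ne i b with h2 | h2
    · right; left; simp [h2, Equiv.swap_apply_right]
    · right; right; exact ⟨h, h2, Equiv.swap_apply_of_ne_of_ne h h2⟩

set_option maxHeartbeats 2000000 in
lemma key_word (k : ℕ) (hk : 1 ≤ k) :
    Equiv.swap 1 (k + k) * Equiv.swap (2 * (k + k) - 1) (2 * (k + k)) =
      crossPerm (k+k) (k+k) * crossPerm (k+k) 1 * crossPerm (k+k) (3*k) *
      crossPerm (k+k) (k+k) * crossPerm (k+k) 1 * crossPerm (k+k) (k+k) *
      crossPerm (k+k) (3*k) * crossPerm (k+k) 1 * crossPerm (k+k) (k+k) *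
      crossPerm (k+k) 1 := by
  ext i
  simp only [Equiv.Perm.mul_apply]
  have hs1 := swap_spec (2 * (k + k) - 1) (2 * (k + k)) i
  generalize hgs1 : Equiv.swap (2 * (k + k) - 1) (2 * (k + k)) i = b1 at hs1 ⊢
  have hs2 := swap_spec 1 (k + k) b1
  generalize hgs2 : Equiv.swap 1 (k + k) b1 = b2 at hs2 ⊢
  have h1 := crossPerm_spec (k+k) 1 i
  generalize hg1 : crossPerm (k+k) 1 i = a1 at h1 ⊢
  have h2 := crossPerm_spec (k+k) (k+k) a1
  generalize hg2 : crossPerm (k+k) (k+k) a1 = a2 at h2 ⊢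
  have h3 := crossPerm_spec (k+k) 1 a2
  generalize hg3 : crossPerm (k+k) 1 a2 = a3 at h3 ⊢
  have h4 := crossPerm_spec (k+k) (3*k) a3
  generalize hg4 : crossPerm (k+k) (3*k) a3 = a4 at h4 ⊢
  have h5 := crossPerm_spec (k+k) (k+k) a4
  generalize hg5 : crossPerm (k+k) (k+k) a4 = a5 at h5 ⊢
  have h6 := crossPerm_spec (k+k) 1 a5
  generalize hg6 : crossPerm (k+k) 1 a5 = a6 at h6 ⊢
  have h7 := crossPerm_spec (k+k) (k+k) a6
  generalize hg7 : crossPerm (k+k) (k+k) a6 = a7 at h7 ⊢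
  have h8 := crossPerm_spec (k+k) (3*k) a7
  generalize hg8 : crossPerm (k+k) (3*k) a7 = a8 at h8 ⊢
  have h9 := crossPerm_spec (k+k) 1 a8
  generalize hg9 : crossPerm (k+k) 1 a8 = a9 at h9 ⊢
  have h10 := crossPerm_spec (k+k) (k+k) a9
  generalize hg10 : crossPerm (k+k) (k+k) a9 = a10 at h10 ⊢
  omega

theorem stmt4 (n : ℕ) (hn : Even n) (hn2 : 2 ≤ n)
    (m : ℕ) (hm : 5 * n / 2 - 1 ≤ m) :
    Equiv.swap 1 n * Equiv.swap (2 * n - 1) (2 * n) ∈ C n m := by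
  obtain ⟨k, rfl⟩ := hn
  have hk : 1 ≤ k := by omega
  have mem : ∀ j, 1 ≤ j → j ≤ m - (k + k) + 1 → crossPerm (k + k) j ∈ C (k + k) m :=
    fun j h1 h2 => Subgroup.subset_closure ⟨j, h1, h2, rfl⟩
  have m1 : crossPerm (k + k) 1 ∈ C (k + k) m := mem 1 (by omega) (by omega)
  have mn : crossPerm (k + k) (k + k) ∈ C (k + k) m := mem (k + k) (by omega) (by omega)
  have mq : crossPerm (k + k) (3 * k) ∈ C (k + k) m := mem (3 * k) (by omega) (by omega)
  rw [key_word k hk]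
  exact mul_mem (mul_mem (mul_mem (mul_mem (mul_mem (mul_mem (mul_mem (mul_mem
    (mul_mem mn m1) mq) mn) m1) mn) mq) m1) mn) m1
end

section
/- Let n be an integer with n ≡ 0 (mod 4) and n ≥ 4, and let m be an integer with m ≥ 3n + 1. Then for all integers a, b with 1 ≤ a, a + 1 < b, and b + 1 ≤ m, the product of disjoint adjacent transpositions (a, a+1)(b, b+1) belongs to C(n, m). -/
namespace Stmt6Aux

def sigmaP (n j : ℕ) : Equiv.Perm ℕ := crossPerm n j * crossPerm n (j+1)

lemma sigmaP_apply (n j : ℕ) (hn : 2 ≤ n) (i : ℕ) :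
    sigmaP n j i = if j ≤ i ∧ i ≤ j + 1 then i + n - 1
      else if j + 2 ≤ i ∧ i ≤ j + n then i - 2 else i := by
  simp only [sigmaP, Equiv.Perm.mul_apply, crossPerm, Function.Involutive.coe_toPerm]
  unfold crossFun
  split_ifs <;> omega

lemma sigmaP_pow_apply (n j : ℕ) (hn : 2 ≤ n) :
    ∀ k, 2 * k ≤ n → ∀ i, ((sigmaP n j) ^ k) i =
      if j ≤ i ∧ i ≤ j + n then
        (if i < j + 2 * k then i + (n + 1) - 2 * k else i - 2 * k)
      else i := by
  intro k
  induction k with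
  | zero =>
    intro _ i
    simp only [pow_zero, Equiv.Perm.one_apply]
    split_ifs <;> omega
  | succ k ih =>
    intro hk i
    rw [pow_succ, Equiv.Perm.mul_apply, ih (by omega), sigmaP_apply n j hn i]
    split_ifs <;> omega

lemma rot_apply (n j : ℕ) (hn : 4 ≤ n) (hmod : n % 2 = 0) (i : ℕ) :
    ((sigmaP n j) ^ (n / 2)) i =
      if j ≤ i ∧ i < j + n then i + 1 else if i = j + n then j else i := by
  rw [sigmaP_pow_apply n j (by omega) (n/2) (by omega) i]
  split_ifs <;> omega

lemma crossPerm_mem (n m j : ℕ) (hnm : n ≤ m) (h1 : 1 ≤ j) (h2 : j + n ≤ m + 1) :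
    crossPerm n j ∈ C n m :=
  Subgroup.subset_closure ⟨j, h1, by omega, rfl⟩

lemma rot_mem (n m j : ℕ) (hnm : n ≤ m) (h1 : 1 ≤ j) (h2 : j + 1 + n ≤ m + 1) :
    (sigmaP n j) ^ (n / 2) ∈ C n m :=
  pow_mem (mul_mem (crossPerm_mem n m j hnm h1 (by omega))
    (crossPerm_mem n m (j+1) hnm (by omega) h2)) _

/-- the 3-cycle (x y z) -/
def cyc3 (x y z : ℕ) : Equiv.Perm ℕ := Equiv.swap x z * Equiv.swap x y

lemma cyc3_apply (x y z i : ℕ) (hxy : x ≠ y) (hxz : x ≠ z) (hyz : y ≠ z) :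
    cyc3 x y z i = if i = x then y else if i = y then z else if i = z then x else i := by
  simp only [cyc3, Equiv.Perm.mul_apply, Equiv.swap_apply_def]
  split_ifs <;> omega

lemma cyc3_conj (σ : Equiv.Perm ℕ) (x y z : ℕ) :
    σ * cyc3 x y z * σ⁻¹ = cyc3 (σ x) (σ y) (σ z) := by
  simp only [cyc3]
  rw [Equiv.swap_apply_apply, Equiv.swap_apply_apply]
  group

lemma gamma_mem (n m j : ℕ) (hn : 4 ≤ n) (hmod : n % 2 = 0) (hnm : n ≤ m)
    (h1 : 1 ≤ j) (h2 : j + 2 + n ≤ m + 1) :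
    cyc3 j (j+1) (j+n+1) ∈ C n m := by
  have heq : cyc3 j (j+1) (j+n+1)
      = (sigmaP n j)^(n/2) * ((sigmaP n (j+1))^(n/2))⁻¹ := by
    rw [eq_mul_inv_iff_mul_eq]
    ext i
    rw [Equiv.Perm.mul_apply, rot_apply n (j+1) hn hmod i, rot_apply n j hn hmod,
        cyc3_apply _ _ _ _ (by omega) (by omega) (by omega)]
    split_ifs <;> omega
  rw [heq]
  exact mul_mem (rot_mem n m j hnm h1 (by omega))
    (inv_mem (rot_mem n m (j+1) hnm (by omega) (by omega)))

lemma c123_mem (n m : ℕ) (hn : 4 ≤ n) (hmod : n % 2 = 0) (hm : 3*n+1 ≤ m) :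
    cyc3 1 2 3 ∈ C n m := by
  have htm : (sigmaP n 3)^(n/2) ∈ C n m := rot_mem n m 3 (by omega) (by omega) (by omega)
  have h12 : cyc3 1 2 (n+2) ∈ C n m := by
    have := gamma_mem n m 1 hn hmod (by omega) (by omega) (by omega)
    rwa [show (1:ℕ)+1 = 2 by omega, show 1+n+1 = n+2 by omega] at this
  have e1 : ((sigmaP n 3)^(n/2)) (((sigmaP n 3)^(n/2)) 1) = 1 := by
    rw [rot_apply n 3 hn hmod, rot_apply n 3 hn hmod]
    split_ifs <;> omega
  have e2 : ((sigmaP n 3)^(n/2)) (((sigmaP n 3)^(n/2)) 2) = 2 := by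
    rw [rot_apply n 3 hn hmod, rot_apply n 3 hn hmod]
    split_ifs <;> omega
  have e3 : ((sigmaP n 3)^(n/2)) (((sigmaP n 3)^(n/2)) (n+2)) = 3 := by
    rw [rot_apply n 3 hn hmod, rot_apply n 3 hn hmod]
    split_ifs <;> omega
  have key : ((sigmaP n 3)^(n/2) * (sigmaP n 3)^(n/2)) * cyc3 1 2 (n+2)
      * ((sigmaP n 3)^(n/2) * (sigmaP n 3)^(n/2))⁻¹ = cyc3 1 2 3 := by
    rw [cyc3_conj]
    simp only [Equiv.Perm.mul_apply]
    rw [e1, e2, e3]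
  rw [← key]
  exact mul_mem (mul_mem (mul_mem htm htm) h12) (inv_mem (mul_mem htm htm))

lemma consec_mem (n m : ℕ) (hn : 4 ≤ n) (hmod : n % 2 = 0) (hm : 3*n+1 ≤ m) :
    ∀ j, 1 ≤ j → j + 3 ≤ m + 1 → cyc3 j (j+1) (j+2) ∈ C n m := by
  intro j
  induction j with
  | zero => omega
  | succ j ih =>
    intro _ h2
    rcases Nat.eq_zero_or_pos j with rfl | hj
    · have := c123_mem n m hn hmod hm
      rwa [show (1:ℕ) = 0+1 by omega, show (2:ℕ) = 0+1+1 by omega,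
        show (3:ℕ) = 0+1+2 by omega] at this
    · have hprev := ih hj (by omega)
      have e1 : ((sigmaP n (min j (m-n)))^(n/2)) j = j+1 := by
        rw [rot_apply n _ hn hmod]; split_ifs <;> omega
      have e2 : ((sigmaP n (min j (m-n)))^(n/2)) (j+1) = j+2 := by
        rw [rot_apply n _ hn hmod]; split_ifs <;> omega
      have e3 : ((sigmaP n (min j (m-n)))^(n/2)) (j+2) = j+3 := by
        rw [rot_apply n _ hn hmod]; split_ifs <;> omega
      have key : ((sigmaP n (min j (m-n)))^(n/2)) * cyc3 j (j+1) (j+2)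
          * ((sigmaP n (min j (m-n)))^(n/2))⁻¹ = cyc3 (j+1) (j+1+1) (j+1+2) := by
        rw [cyc3_conj, e1, e2, e3, show j+1+1 = j+2 by omega, show j+1+2 = j+3 by omega]
      rw [← key]
      have hrm : ((sigmaP n (min j (m-n)))^(n/2)) ∈ C n m :=
        rot_mem n m _ (by omega) (by omega) (by omega)
      exact mul_mem (mul_mem hrm hprev) (inv_mem hrm)

lemma pairSwap_mem (n m : ℕ) (hn : 4 ≤ n) (hmod : n % 2 = 0) (hm : 3*n+1 ≤ m)
    (j : ℕ) (h1 : 1 ≤ j) (h2 : j + 3 ≤ m) :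
    Equiv.swap j (j+1) * Equiv.swap (j+2) (j+3) ∈ C n m := by
  have heq : Equiv.swap j (j+1) * Equiv.swap (j+2) (j+3)
      = cyc3 j (j+1) (j+2) * cyc3 (j+1) (j+2) (j+3) := by
    ext i
    rw [Equiv.Perm.mul_apply, Equiv.Perm.mul_apply,
      cyc3_apply _ _ _ _ (by omega) (by omega) (by omega),
      cyc3_apply _ _ _ _ (by omega) (by omega) (by omega),
      Equiv.swap_apply_def, Equiv.swap_apply_def]
    split_ifs <;> omega
  rw [heq]
  have h1' := consec_mem n m hn hmod hm j h1 (by omega)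
  have h2' := consec_mem n m hn hmod hm (j+1) (by omega) (by omega)
  rw [show j+1+1 = j+2 by omega, show j+1+2 = j+3 by omega] at h2'
  exact mul_mem h1' h2'

lemma triple_mem (n m : ℕ) (hn : 4 ≤ n) (hmod : n % 2 = 0) (hm : 3*n+1 ≤ m)
    (a : ℕ) (h1 : 1 ≤ a) (h2 : a + 4 ≤ m) :
    Equiv.swap a (a+1) * Equiv.swap (a+3) (a+4) ∈ C n m := by
  have heq : Equiv.swap a (a+1) * Equiv.swap (a+3) (a+4)
      = (Equiv.swap a (a+1) * Equiv.swap (a+2) (a+3)) * cyc3 (a+2) (a+3) (a+4) := by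
    rw [mul_assoc]
    congr 1
    ext i
    rw [Equiv.Perm.mul_apply, cyc3_apply _ _ _ _ (by omega) (by omega) (by omega),
      Equiv.swap_apply_def, Equiv.swap_apply_def]
    split_ifs <;> omega
  rw [heq]
  have hc := consec_mem n m hn hmod hm (a+2) (by omega) (by omega)
  rw [show a+2+1 = a+3 by omega, show a+2+2 = a+4 by omega] at hc
  exact mul_mem (pairSwap_mem n m hn hmod hm a h1 (by omega)) hc

lemma chain_mem (n m : ℕ) (hn : 4 ≤ n) (hmod : n % 2 = 0) (hm : 3*n+1 ≤ m) :
    ∀ b a, 1 ≤ a → a + 2 ≤ b → b + 1 ≤ m →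
      Equiv.swap a (a+1) * Equiv.swap b (b+1) ∈ C n m := by
  intro b
  induction b using Nat.strong_induction_on with
  | _ b ih =>
    intro a h1 h2 h3
    rcases show b = a + 2 ∨ b = a + 3 ∨ a + 4 ≤ b by omega with rfl | rfl | hb
    · have := pairSwap_mem n m hn hmod hm a h1 (by omega)
      rwa [show a+2+1 = a+3 by omega] at this
    · have := triple_mem n m hn hmod hm a h1 (by omega)
      rwa [show a+3+1 = a+4 by omega] at this
    · obtain ⟨c, rfl⟩ : ∃ c, b = c + 2 := ⟨b - 2, by omega⟩
      have hA := ih c (by omega) a h1 (by omega) (by omega)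
      have hB := pairSwap_mem n m hn hmod hm c (by omega) (by omega)
      have heq : Equiv.swap a (a+1) * Equiv.swap (c+2) (c+2+1)
          = (Equiv.swap a (a+1) * Equiv.swap c (c+1))
            * (Equiv.swap c (c+1) * Equiv.swap (c+2) (c+3)) := by
        rw [mul_assoc, ← mul_assoc (Equiv.swap c (c+1)), Equiv.swap_mul_self, one_mul,
          show c+2+1 = c+3 by omega]
      rw [heq]
      exact mul_mem hA hB

end Stmt6Aux

theorem stmt6 (n : ℕ) (hn : n % 4 = 0) (hn4 : 4 ≤ n)
    (m : ℕ) (hm : 3 * n + 1 ≤ m)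
    (a b : ℕ) (ha : 1 ≤ a) (hab : a + 1 < b) (hb : b + 1 ≤ m) :
    Equiv.swap a (a + 1) * Equiv.swap b (b + 1) ∈ C n m := by
  exact Stmt6Aux.chain_mem n m hn4 (by omega) hm b a ha (by omega) hb
end

section
/- Let n be an odd integer with n ≥ 3 and let m ≥ n. Then every element σ of C(n, m) preserves parity: σ(i) ≡ i (mod 2) for every i ∈ {1, …, m}. In particular, C(n, m) is contained in the parity-preserving subgroup P_m of S_m. -/
theorem stmt7 (n : ℕ) (hn : Odd n) (hn3 : 3 ≤ n) (m : ℕ) (hm : n ≤ m)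
    (σ : Equiv.Perm ℕ) (hσ : σ ∈ C n m) :
    ∀ i, 1 ≤ i → i ≤ m → σ i % 2 = i % 2 := by
  have key : ∀ i, σ i % 2 = i % 2 := by
    refine Subgroup.closure_induction ?_ ?_ ?_ ?_ hσ
    · rintro τ ⟨j, hj1, hj2, rfl⟩ i
      show crossFun n j i % 2 = i % 2
      obtain ⟨t, ht⟩ := hn
      unfold crossFun
      split_ifs <;> omega
    · intro i; rfl
    · intro a b _ _ ha hb i
      have : (a * b) i = a (b i) := rfl
      rw [this, ha, hb]
    · intro a _ ha i
      have := ha (a⁻¹ i)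
      rw [Equiv.Perm.coe_inv, Equiv.apply_symm_apply] at this; rw [Equiv.Perm.coe_inv]; omega
  intro i _ _
  exact key i
end

section
/- Let n be an integer with n ≡ 1 (mod 4) and n ≥ 5, and let m be an integer with m ≥ 3n − 2. Then for all pairwise distinct integers a, b, c, d ∈ {1, …, m} that all have the same parity (all odd or all even), the product of disjoint transpositions (a, b)(c, d) belongs to C(n, m). -/
/-- The 3-cycle `x → y → z → x` as a permutation of `ℕ`. -/
def c3 (x y z : ℕ) : Equiv.Perm ℕ := Equiv.swap x z * Equiv.swap x y

lemma c3_inv (x y z : ℕ) : (c3 x y z)⁻¹ = c3 x z y := by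
  unfold c3
  rw [mul_inv_rev, Equiv.swap_inv, Equiv.swap_inv]

lemma c3_conj (σ : Equiv.Perm ℕ) (x y z : ℕ) :
    σ * c3 x y z * σ⁻¹ = c3 (σ x) (σ y) (σ z) := by
  unfold c3
  rw [Equiv.swap_apply_apply σ x z, Equiv.swap_apply_apply σ x y]
  group

set_option maxHeartbeats 1000000 in
lemma c3_apply_fix (x y z w : ℕ) (h1 : w ≠ x) (h2 : w ≠ y) (h3 : w ≠ z) :
    c3 x y z w = w := by
  simp only [c3, Equiv.Perm.mul_apply, Equiv.swap_apply_def]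
  split_ifs <;> omega

set_option maxHeartbeats 1000000 in
lemma c3_apply₁ (x y z : ℕ) (h1 : x ≠ y) (h2 : x ≠ z) (h3 : y ≠ z) :
    c3 x y z x = y := by
  simp only [c3, Equiv.Perm.mul_apply, Equiv.swap_apply_def]
  split_ifs <;> omega

set_option maxHeartbeats 1000000 in
lemma c3_apply₂ (x y z : ℕ) (h1 : x ≠ y) (h2 : x ≠ z) (h3 : y ≠ z) :
    c3 x y z y = z := by
  simp only [c3, Equiv.Perm.mul_apply, Equiv.swap_apply_def]
  split_ifs <;> omega

set_option maxHeartbeats 1000000 in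
lemma c3_apply₃ (x y z : ℕ) (h1 : x ≠ y) (h2 : x ≠ z) (h3 : y ≠ z) :
    c3 x y z z = x := by
  simp only [c3, Equiv.Perm.mul_apply, Equiv.swap_apply_def]
  split_ifs <;> omega

set_option maxHeartbeats 1000000 in
lemma c3_rot (x y z : ℕ) (h1 : x ≠ y) (h2 : x ≠ z) (h3 : y ≠ z) :
    c3 x y z = c3 y z x := by
  ext i
  simp only [c3, Equiv.Perm.mul_apply, Equiv.swap_apply_def]
  split_ifs <;> omega

set_option maxHeartbeats 2000000 in
/-- `c3 p b a * c3 p a c = c3 a c b` for pairwise distinct points. -/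
lemma c3_L4 (p a b c : ℕ) (h1 : p ≠ a) (h2 : p ≠ b) (h3 : p ≠ c)
    (h4 : a ≠ b) (h5 : a ≠ c) (h6 : b ≠ c) :
    c3 p b a * c3 p a c = c3 a c b := by
  ext i
  simp only [c3, Equiv.Perm.mul_apply, Equiv.swap_apply_def]
  split_ifs <;> omega

set_option maxHeartbeats 2000000 in
/-- `c3 p r q * c3 p a r = c3 p a q` for pairwise distinct points. -/
lemma c3_L5 (p a q r : ℕ) (h1 : p ≠ a) (h2 : p ≠ q) (h3 : p ≠ r)
    (h4 : a ≠ q) (h5 : a ≠ r) (h6 : q ≠ r) :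
    c3 p r q * c3 p a r = c3 p a q := by
  ext i
  simp only [c3, Equiv.Perm.mul_apply, Equiv.swap_apply_def]
  split_ifs <;> omega

set_option maxHeartbeats 2000000 in
/-- `(a b)(c d) = (a c b) * (a c d)` for pairwise distinct points. -/
lemma c3_L6 (a b c d : ℕ) (h1 : a ≠ b) (h2 : a ≠ c) (h3 : a ≠ d)
    (h4 : b ≠ c) (h5 : b ≠ d) (h6 : c ≠ d) :
    Equiv.swap a b * Equiv.swap c d = c3 a c b * c3 a c d := by
  ext i
  simp only [c3, Equiv.Perm.mul_apply, Equiv.swap_apply_def]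
  split_ifs <;> omega

set_option maxHeartbeats 4000000 in
/-- The fundamental identity: `π_{j+1} π_{j+2} π_{j+1} π_j` is the 3-cycle
`(j, j+n+1, j+n-1)`. -/
lemma cross_prod_eq (n j : ℕ) (hn5 : 5 ≤ n) :
    crossPerm n (j+1) * crossPerm n (j+2) * crossPerm n (j+1) * crossPerm n j
      = c3 j (j+n+1) (j+n-1) := by
  ext i
  simp only [Equiv.Perm.mul_apply, crossPerm, Function.Involutive.coe_toPerm, crossFun, c3,
    Equiv.swap_apply_def]
  split_ifs <;> omega

lemma crossPerm_mem (n m j : ℕ) (h1 : 1 ≤ j) (h2 : j ≤ m - n + 1) :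
    crossPerm n j ∈ C n m :=
  Subgroup.subset_closure ⟨j, h1, h2, rfl⟩

lemma c_mem (n m j : ℕ) (hn5 : 5 ≤ n) (hj : 1 ≤ j) (hjm : j + n + 1 ≤ m) :
    c3 j (j+n+1) (j+n-1) ∈ C n m := by
  rw [← cross_prod_eq n j hn5]
  exact mul_mem (mul_mem (mul_mem
    (crossPerm_mem n m (j+1) (by omega) (by omega))
    (crossPerm_mem n m (j+2) (by omega) (by omega)))
    (crossPerm_mem n m (j+1) (by omega) (by omega)))
    (crossPerm_mem n m j (by omega) (by omega))

lemma d_mem (n m j : ℕ) (hn5 : 5 ≤ n) (hj : 1 ≤ j) (hjm : j + n + 3 ≤ m) :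
    c3 j (j+2) (j+n-1) ∈ C n m := by
  have σmem : c3 (j+2) (j+n+3) (j+n+1) ∈ C n m := by
    have h := c_mem n m (j+2) hn5 (by omega) (by omega)
    rwa [show j+2+n+1 = j+n+3 by omega, show j+2+n-1 = j+n+1 by omega] at h
  have cmem := c_mem n m j hn5 hj (by omega)
  have e1 : c3 (j+2) (j+n+3) (j+n+1) j = j :=
    c3_apply_fix (j+2) (j+n+3) (j+n+1) j (by omega) (by omega) (by omega)
  have e2 : c3 (j+2) (j+n+3) (j+n+1) (j+n+1) = j+2 :=
    c3_apply₃ (j+2) (j+n+3) (j+n+1) (by omega) (by omega) (by omega)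
  have e3 : c3 (j+2) (j+n+3) (j+n+1) (j+n-1) = j+n-1 :=
    c3_apply_fix (j+2) (j+n+3) (j+n+1) (j+n-1) (by omega) (by omega) (by omega)
  have key : c3 (j+2) (j+n+3) (j+n+1) * c3 j (j+n+1) (j+n-1)
      * (c3 (j+2) (j+n+3) (j+n+1))⁻¹ = c3 j (j+2) (j+n-1) := by
    rw [c3_conj, e1, e2, e3]
  exact key ▸ mul_mem (mul_mem σmem cmem) (inv_mem σmem)

/-- Top family of adjacent 3-cycles. -/
lemma v_mem (n m j : ℕ) (hn5 : 5 ≤ n) (hj : 1 ≤ j) (hjm : j + n + 3 ≤ m) :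
    c3 (j+n-1) (j+n+1) (j+n+3) ∈ C n m := by
  have cmem := c_mem n m j hn5 hj (by omega)
  have σ0mem : c3 (j+2) (j+n+3) (j+n+1) ∈ C n m := by
    have h := c_mem n m (j+2) hn5 (by omega) (by omega)
    rwa [show j+2+n+1 = j+n+3 by omega, show j+2+n-1 = j+n+1 by omega] at h
  have σmem : c3 (j+2) (j+n+1) (j+n+3) ∈ C n m := by
    have h : c3 (j+2) (j+n+1) (j+n+3) = (c3 (j+2) (j+n+3) (j+n+1))⁻¹ :=
      (c3_inv _ _ _).symm
    exact h ▸ inv_mem σ0mem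
  have e1 : c3 (j+2) (j+n+1) (j+n+3) j = j :=
    c3_apply_fix (j+2) (j+n+1) (j+n+3) j (by omega) (by omega) (by omega)
  have e2 : c3 (j+2) (j+n+1) (j+n+3) (j+n+1) = j+n+3 :=
    c3_apply₂ (j+2) (j+n+1) (j+n+3) (by omega) (by omega) (by omega)
  have e3 : c3 (j+2) (j+n+1) (j+n+3) (j+n-1) = j+n-1 :=
    c3_apply_fix (j+2) (j+n+1) (j+n+3) (j+n-1) (by omega) (by omega) (by omega)
  have ukey : c3 (j+2) (j+n+1) (j+n+3) * c3 j (j+n+1) (j+n-1)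
      * (c3 (j+2) (j+n+1) (j+n+3))⁻¹ = c3 j (j+n+3) (j+n-1) := by
    rw [c3_conj, e1, e2, e3]
  have umem : c3 j (j+n+3) (j+n-1) ∈ C n m :=
    ukey ▸ mul_mem (mul_mem σmem cmem) (inv_mem σmem)
  have vkey : c3 j (j+n+3) (j+n-1) * (c3 j (j+n+1) (j+n-1))⁻¹
      = c3 (j+n-1) (j+n+1) (j+n+3) := by
    rw [c3_inv]
    exact c3_L4 j (j+n-1) (j+n+3) (j+n+1) (by omega) (by omega) (by omega)
      (by omega) (by omega) (by omega)
  exact vkey ▸ mul_mem umem (inv_mem cmem)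

/-- All adjacent 3-cycles `(x, x+2, x+4)` lie in `C n m`. -/
lemma t_mem (n m : ℕ) (hn : n % 4 = 1) (hn5 : 5 ≤ n) (hm : 3 * n - 2 ≤ m)
    (x : ℕ) (hx : 1 ≤ x) (hxm : x + 4 ≤ m) : c3 x (x+2) (x+4) ∈ C n m := by
  rcases le_or_gt n x with h | h
  · -- top family
    obtain ⟨j, hj1, hj2⟩ : ∃ j, 1 ≤ j ∧ x + 2 = j + n + 1 := ⟨x + 1 - n, by omega, by omega⟩
    rw [show x + 4 = j + n + 3 by omega, hj2, show x = j + n - 1 by omega]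
    exact v_mem n m j hn5 hj1 (by omega)
  · -- bottom family
    rcases (by omega : n = 5 ∨ 9 ≤ n) with h5 | h9
    · subst h5
      have h := d_mem 5 m x hn5 hx (by omega)
      rwa [show x + 5 - 1 = x + 4 by omega] at h
    · -- n ≥ 9
      have dmem := d_mem n m x hn5 hx (by omega)
      have d2mem : c3 (x+2) (x+4) (x+n+1) ∈ C n m := by
        have h := d_mem n m (x+2) hn5 (by omega) (by omega)
        rwa [show x+2+2 = x+4 by omega, show x+2+n-1 = x+n+1 by omega] at h
      have e1 : c3 (x+2) (x+4) (x+n+1) x = x :=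
        c3_apply_fix (x+2) (x+4) (x+n+1) x (by omega) (by omega) (by omega)
      have e2 : c3 (x+2) (x+4) (x+n+1) (x+2) = x+4 :=
        c3_apply₁ (x+2) (x+4) (x+n+1) (by omega) (by omega) (by omega)
      have e3 : c3 (x+2) (x+4) (x+n+1) (x+n-1) = x+n-1 :=
        c3_apply_fix (x+2) (x+4) (x+n+1) (x+n-1) (by omega) (by omega) (by omega)
      have wkey : c3 (x+2) (x+4) (x+n+1) * c3 x (x+2) (x+n-1)
          * (c3 (x+2) (x+4) (x+n+1))⁻¹ = c3 x (x+4) (x+n-1) := by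
        rw [c3_conj, e1, e2, e3]
      have wmem : c3 x (x+4) (x+n-1) ∈ C n m :=
        wkey ▸ mul_mem (mul_mem d2mem dmem) (inv_mem d2mem)
      have tkey : (c3 x (x+4) (x+n-1))⁻¹ * c3 x (x+2) (x+n-1) = c3 x (x+2) (x+4) := by
        rw [c3_inv]
        exact c3_L5 x (x+2) (x+4) (x+n-1) (by omega) (by omega) (by omega)
          (by omega) (by omega) (by omega)
      exact tkey ▸ mul_mem (inv_mem wmem) dmem

/-- All sorted same-parity 3-cycles lie in `C n m`. -/
lemma c3_sorted_mem (n m : ℕ) (hn : n % 4 = 1) (hn5 : 5 ≤ n) (hm : 3 * n - 2 ≤ m) :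
    ∀ z x y, 1 ≤ x → x < y → y < z → z ≤ m → x % 2 = z % 2 → y % 2 = z % 2 →
      c3 x y z ∈ C n m := by
  intro z
  induction z using Nat.strong_induction_on with
  | _ z ih =>
    intro x y hx hxy hyz hzm hp1 hp2
    rcases (by omega : z = x + 4 ∨ x + 6 ≤ z) with hA | hB
    · have hy : y = x + 2 := by omega
      subst hA hy
      exact t_mem n m hn hn5 hm x hx hzm
    · obtain ⟨w, rfl⟩ : ∃ w, z = w + 4 := ⟨z - 4, by omega⟩
      have tmem : c3 w (w+2) (w+4) ∈ C n m := t_mem n m hn hn5 hm w (by omega) (by omega)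
      rcases (by omega : y = w + 2 ∨ y = w ∨ y < w) with hy | hy | hy
      · -- y = w + 2
        have ihmem : c3 x w (w+2) ∈ C n m :=
          ih (w+2) (by omega) x w hx (by omega) (by omega) (by omega) (by omega) (by omega)
        have e1 : c3 w (w+2) (w+4) x = x :=
          c3_apply_fix w (w+2) (w+4) x (by omega) (by omega) (by omega)
        have e2 : c3 w (w+2) (w+4) w = w+2 :=
          c3_apply₁ w (w+2) (w+4) (by omega) (by omega) (by omega)
        have e3 : c3 w (w+2) (w+4) (w+2) = w+4 :=
          c3_apply₂ w (w+2) (w+4) (by omega) (by omega) (by omega)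
        have key : c3 w (w+2) (w+4) * c3 x w (w+2) * (c3 w (w+2) (w+4))⁻¹
            = c3 x (w+2) (w+4) := by
          rw [c3_conj, e1, e2, e3]
        rw [hy]
        exact key ▸ mul_mem (mul_mem tmem ihmem) (inv_mem tmem)
      · -- y = w
        have ρmem : c3 w (w+4) (w+2) ∈ C n m := by
          have h : c3 w (w+4) (w+2) = (c3 w (w+2) (w+4))⁻¹ := (c3_inv _ _ _).symm
          exact h ▸ inv_mem tmem
        have ihmem : c3 x w (w+2) ∈ C n m :=
          ih (w+2) (by omega) x w hx (by omega) (by omega) (by omega) (by omega) (by omega)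
        have ihmem' : c3 x (w+2) w ∈ C n m := by
          have h : c3 x (w+2) w = (c3 x w (w+2))⁻¹ := (c3_inv _ _ _).symm
          exact h ▸ inv_mem ihmem
        have e1 : c3 w (w+4) (w+2) x = x :=
          c3_apply_fix w (w+4) (w+2) x (by omega) (by omega) (by omega)
        have e2 : c3 w (w+4) (w+2) (w+2) = w :=
          c3_apply₃ w (w+4) (w+2) (by omega) (by omega) (by omega)
        have e3 : c3 w (w+4) (w+2) w = w+4 :=
          c3_apply₁ w (w+4) (w+2) (by omega) (by omega) (by omega)
        have key : c3 w (w+4) (w+2) * c3 x (w+2) w * (c3 w (w+4) (w+2))⁻¹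
            = c3 x w (w+4) := by
          rw [c3_conj, e1, e2, e3]
        rw [hy]
        exact key ▸ mul_mem (mul_mem ρmem ihmem') (inv_mem ρmem)
      · -- y < w
        have ihmem : c3 x y (w+2) ∈ C n m :=
          ih (w+2) (by omega) x y hx hxy (by omega) (by omega) (by omega) (by omega)
        have e1 : c3 w (w+2) (w+4) x = x :=
          c3_apply_fix w (w+2) (w+4) x (by omega) (by omega) (by omega)
        have e2 : c3 w (w+2) (w+4) y = y :=
          c3_apply_fix w (w+2) (w+4) y (by omega) (by omega) (by omega)
        have e3 : c3 w (w+2) (w+4) (w+2) = w+4 :=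
          c3_apply₂ w (w+2) (w+4) (by omega) (by omega) (by omega)
        have key : c3 w (w+2) (w+4) * c3 x y (w+2) * (c3 w (w+2) (w+4))⁻¹
            = c3 x y (w+4) := by
          rw [c3_conj, e1, e2, e3]
        exact key ▸ mul_mem (mul_mem tmem ihmem) (inv_mem tmem)

/-- All same-parity 3-cycles with pairwise distinct points in `[1, m]` lie in `C n m`. -/
lemma c3_any_mem (n m : ℕ) (hn : n % 4 = 1) (hn5 : 5 ≤ n) (hm : 3 * n - 2 ≤ m)
    (p q r : ℕ) (hp : 1 ≤ p) (hq : 1 ≤ q) (hr : 1 ≤ r)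
    (hpm : p ≤ m) (hqm : q ≤ m) (hrm : r ≤ m)
    (hpq : p ≠ q) (hpr : p ≠ r) (hqr : q ≠ r)
    (e1 : p % 2 = q % 2) (e2 : q % 2 = r % 2) :
    c3 p q r ∈ C n m := by
  have S := c3_sorted_mem n m hn hn5 hm
  rcases lt_trichotomy p q with h1 | h1 | h1
  · rcases lt_trichotomy q r with h2 | h2 | h2
    · exact S r p q hp h1 h2 hrm (by omega) (by omega)
    · omega
    · rcases lt_trichotomy p r with h3 | h3 | h3
      · -- p < r < q
        have h : c3 p q r = (c3 p r q)⁻¹ := by rw [c3_inv]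
        exact h ▸ inv_mem (S q p r hp h3 h2 hqm (by omega) (by omega))
      · omega
      · -- r < p < q
        rw [c3_rot p q r hpq hpr hqr, c3_rot q r p hqr (Ne.symm hpq) (Ne.symm hpr)]
        exact S q r p hr h3 h1 hqm (by omega) (by omega)
  · omega
  · rcases lt_trichotomy p r with h2 | h2 | h2
    · -- q < p < r
      have h : c3 p q r = (c3 q p r)⁻¹ := by
        rw [c3_inv, c3_rot q r p hqr (Ne.symm hpq) (Ne.symm hpr),
          c3_rot r p q (Ne.symm hpr) (Ne.symm hqr) hpq]
      exact h ▸ inv_mem (S r q p hq h1 h2 hrm (by omega) (by omega))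
    · omega
    · rcases lt_trichotomy q r with h3 | h3 | h3
      · -- q < r < p
        rw [c3_rot p q r hpq hpr hqr]
        exact S p q r hq h3 h2 hpm (by omega) (by omega)
      · omega
      · -- r < q < p
        have h : c3 p q r = (c3 r q p)⁻¹ := by
          rw [c3_inv, c3_rot r p q (Ne.symm hpr) (Ne.symm hqr) hpq]
        exact h ▸ inv_mem (S p r q hr h3 h1 hpm (by omega) (by omega))

theorem stmt10 (n : ℕ) (hn : n % 4 = 1) (hn5 : 5 ≤ n)
    (m : ℕ) (hm : 3 * n - 2 ≤ m)
    (a b c d : ℕ)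
    (ha1 : 1 ≤ a) (ham : a ≤ m) (hb1 : 1 ≤ b) (hbm : b ≤ m)
    (hc1 : 1 ≤ c) (hcm : c ≤ m) (hd1 : 1 ≤ d) (hdm : d ≤ m)
    (hab : a ≠ b) (hac : a ≠ c) (had : a ≠ d)
    (hbc : b ≠ c) (hbd : b ≠ d) (hcd : c ≠ d)
    (hpar : a % 2 = b % 2 ∧ b % 2 = c % 2 ∧ c % 2 = d % 2) :
    Equiv.swap a b * Equiv.swap c d ∈ C n m := by
  obtain ⟨hp1, hp2, hp3⟩ := hpar
  rw [c3_L6 a b c d hab hac had hbc hbd hcd]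
  exact mul_mem
    (c3_any_mem n m hn hn5 hm a c b ha1 hc1 hb1 ham hcm hbm hac hab (Ne.symm hbc)
      (by omega) (by omega))
    (c3_any_mem n m hn hn5 hm a c d ha1 hc1 hd1 ham hcm hdm hac had hcd
      (by omega) (by omega))
end
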